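/- arXiv:2208.11841 — 13 statements merged into one kernel-verified Lean document; each statement's English description precedes it below -/
import Mathlib

section
/- Let A be a finite-dimensional pre-Malcev algebra over a field F of characteristic zero and let r ∈ A ⊗ A be a symmetric element. Then r is a solution of the analogue of the classical Yang–Baxter equation on A if and only if T_r is an O-operator of A associated to the bimodule (A*; L* − R*, −R*), i.e. T_r(η)·T_r(ζ) = T_r((L*_{T_r(η)} − R*_{T_r(η)})(ζ)) + T_r(−R*_{T_r(ζ)}(η)) for all η, ζ ∈ A*. -/
open TensorProduct

section Defs

variable {F : Type*} [Field F]
variable {A : Type*} [AddCommGroup A] [Module F A]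
variable {V : Type*} [AddCommGroup V] [Module F V]

/-- The pre-Malcev identity for a (curried) bilinear product. -/
def PreMalcevFn {A : Type*} [AddCommGroup A] (mul : A → A → A) : Prop :=
  ∀ x y z t : A,
    mul (mul y z) (mul x t) - mul (mul z y) (mul x t)
      + mul (mul (mul x y) z) t - mul (mul (mul y x) z) t
      - mul (mul z (mul x y)) t + mul (mul z (mul y x)) t
      + mul y (mul (mul x z) t) - mul y (mul (mul z x) t)
      - mul x (mul y (mul z t)) + mul z (mul x (mul y t)) = 0

/-- The semidirect-product multiplication on `A × V`. -/
def sdFn (mul : A →ₗ[F] A →ₗ[F] A) (l r : A →ₗ[F] Module.End F V) :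
    A × V → A × V → A × V :=
  fun p q => (mul p.1 q.1, l p.1 q.2 + r q.1 p.2)

/-- `(V; l, r)` is a bimodule of the pre-Malcev algebra `(A, mul)` iff the semidirect
product `A ⋉ V` is again a pre-Malcev algebra. -/
def IsBimodule (mul : A →ₗ[F] A →ₗ[F] A) (l r : A →ₗ[F] Module.End F V) : Prop :=
  PreMalcevFn (sdFn mul l r)

/-- `T` is an O-operator of `(A, mul)` associated to the bimodule `(V; l, r)`. -/
def IsOOp (mul : A →ₗ[F] A →ₗ[F] A) (l r : A →ₗ[F] Module.End F V)
    (T : V →ₗ[F] A) : Prop :=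
  ∀ v w : V, mul (T v) (T w) = T (l (T v) w + r (T w) v)

/-- Two O-operators are compatible if every linear combination is again an O-operator. -/
def Compatible (mul : A →ₗ[F] A →ₗ[F] A) (l r : A →ₗ[F] Module.End F V)
    (T₁ T₂ : V →ₗ[F] A) : Prop :=
  ∀ k₁ k₂ : F, IsOOp mul l r (k₁ • T₁ + k₂ • T₂)

/-- `N` is a Nijenhuis operator for the product `mul`. -/
def IsNijenhuisFn (mul : A → A → A) (N : A →ₗ[F] A) : Prop :=
  ∀ x y : A, mul (N x) (N y) = N (mul (N x) y + mul x (N y) - N (mul x y))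

/-- The dual map `ℓ* : A → End(V*)`, `⟨ℓ*_x ξ, v⟩ = -⟨ξ, ℓ_x v⟩`. -/
def dualRep (l : A →ₗ[F] Module.End F V) :
    A →ₗ[F] Module.End F (Module.Dual F V) where
  toFun x := -(l x).dualMap
  map_add' x y := by ext ξ v; simp; abel
  map_smul' c x := by ext ξ v; simp

/-- The map `ℓ* - 𝔯* : A → End(V*)`, i.e. `x ↦ ℓ*_x - 𝔯*_x`; it is equal to
`dualRep l - dualRep r`. -/
def dualRepSub (l r : A →ₗ[F] Module.End F V) :
    A →ₗ[F] Module.End F (Module.Dual F V) where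
  toFun x := -(l x).dualMap - -((r x).dualMap)
  map_add' x y := by ext ξ v; simp; abel
  map_smul' c x := by ext ξ v; simp

/-- The map `-𝔯* : A → End(V*)`, i.e. `x ↦ -(𝔯*_x)`; it is equal to `-(dualRep r)`. -/
def dualRepNeg (r : A →ₗ[F] Module.End F V) :
    A →ₗ[F] Module.End F (Module.Dual F V) where
  toFun x := -(-((r x).dualMap))
  map_add' x y := by ext ξ v; simp
  map_smul' c x := by ext ξ v; simp

/-- The semidirect-product multiplication as a bundled bilinear map. -/
def sdMul (mul : A →ₗ[F] A →ₗ[F] A) (l r : A →ₗ[F] Module.End F V) :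
    (A × V) →ₗ[F] (A × V) →ₗ[F] (A × V) :=
  LinearMap.mk₂ F (sdFn mul l r)
    (fun p p' q => by
      apply Prod.ext <;> simp [sdFn, map_add] <;> abel)
    (fun c p q => by
      apply Prod.ext <;> simp [sdFn, map_smul, smul_add])
    (fun p q q' => by
      apply Prod.ext <;> simp [sdFn, map_add] <;> abel)
    (fun c p q => by
      apply Prod.ext <;> simp [sdFn, map_smul, smul_add])

/-- The left-hand side `-r₁₂·r₁₃ + r₁₂·r₂₃ + [r₁₃, r₂₃]` of the analogue of the
classical Yang-Baxter equation on a pre-Malcev algebra `(B, mul)`. -/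
noncomputable def cybeLHS {B : Type*} [AddCommGroup B] [Module F B]
    (mul : B →ₗ[F] B →ₗ[F] B) (r : B ⊗[F] B) : B ⊗[F] (B ⊗[F] B) :=
  -(TensorProduct.map (TensorProduct.lift mul) LinearMap.id
      (TensorProduct.tensorTensorTensorComm F B B B B (r ⊗ₜ[F] r)))
  + TensorProduct.map LinearMap.id (TensorProduct.map (TensorProduct.lift mul) LinearMap.id)
      (TensorProduct.map LinearMap.id (TensorProduct.assoc F B B B).symm.toLinearMap
        (TensorProduct.assoc F B B (B ⊗[F] B) (r ⊗ₜ[F] r)))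
  + TensorProduct.map LinearMap.id (TensorProduct.map LinearMap.id
      (TensorProduct.lift mul - TensorProduct.lift mul ∘ₗ (TensorProduct.comm F B B).toLinearMap))
      (TensorProduct.assoc F B B (B ⊗[F] B)
        (TensorProduct.tensorTensorTensorComm F B B B B (r ⊗ₜ[F] r)))

/-- `r` is a solution of the analogue of the CYBE on `(B, mul)`. -/
noncomputable def IsCYBE {B : Type*} [AddCommGroup B] [Module F B]
    (mul : B →ₗ[F] B →ₗ[F] B) (r : B ⊗[F] B) : Prop :=
  cybeLHS mul r = 0

/-- The linear map `T_r : A* → A` associated to `r ∈ A ⊗ A`,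
`⟨f, T_r g⟩ = ⟨f ⊗ g, r⟩`. -/
noncomputable def trMap (r : A ⊗[F] A) : Module.Dual F A →ₗ[F] A :=
  dualTensorHom F (Module.Dual F A) A
    (TensorProduct.map (Module.Dual.eval F A) LinearMap.id
      (TensorProduct.comm F A A r))

/-- The product `⋄^T` on `V` induced by a linear map `T : V → A`. -/
def dia (l r : A →ₗ[F] Module.End F V) (T : V →ₗ[F] A) : V → V → V :=
  fun u v => l (T u) v + r (T v) u

/-- The deformation `⋄^T_S` of `⋄^T` by `S`. -/
def diaS (l r : A →ₗ[F] Module.End F V) (T : V →ₗ[F] A) (S : V →ₗ[F] V) : V → V → V :=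
  fun u v => dia l r T (S u) v + dia l r T u (S v) - S (dia l r T u v)

/-- `(N, S)` is a Nijenhuis pair on `(A, mul)` with bimodule `(V; l, r)`. -/
def IsNijPair (mul : A →ₗ[F] A →ₗ[F] A) (l r : A →ₗ[F] Module.End F V)
    (N : A →ₗ[F] A) (S : V →ₗ[F] V) : Prop :=
  IsNijenhuisFn (fun x y => mul x y) N ∧
  (∀ (x : A) (v : V), l (N x) (S v) = S (l (N x) v + l x (S v) - S (l x v))) ∧
  (∀ (x : A) (v : V), r (N x) (S v) = S (r (N x) v + r x (S v) - S (r x v)))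

/-- `(N, S)` is a dual-Nijenhuis pair on `(A, mul)` with bimodule `(V; l, r)`. -/
def IsDualNijPair (mul : A →ₗ[F] A →ₗ[F] A) (l r : A →ₗ[F] Module.End F V)
    (N : A →ₗ[F] A) (S : V →ₗ[F] V) : Prop :=
  IsNijenhuisFn (fun x y => mul x y) N ∧
  (∀ (x : A) (v : V), l (N x) (S v) = S (l (N x) v) + l x (S (S v)) - S (l x (S v))) ∧
  (∀ (x : A) (v : V), r (N x) (S v) = S (r (N x) v) + r x (S (S v)) - S (r x (S v)))

/-- `(N, S)` is a perfect Nijenhuis pair. -/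
def IsPerfectNijPair (mul : A →ₗ[F] A →ₗ[F] A) (l r : A →ₗ[F] Module.End F V)
    (N : A →ₗ[F] A) (S : V →ₗ[F] V) : Prop :=
  IsNijPair mul l r N S ∧
  (∀ (x : A) (v : V), S (S (l x v)) + l x (S (S v)) = (2 : F) • S (l x (S v))) ∧
  (∀ (x : A) (v : V), S (S (r x v)) + r x (S (S v)) = (2 : F) • S (r x (S v)))

/-- `(T, N, S)` is an O-N structure on `(A, mul)` with bimodule `(V; l, r)`. -/
def IsONStruct (mul : A →ₗ[F] A →ₗ[F] A) (l r : A →ₗ[F] Module.End F V)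
    (T : V →ₗ[F] A) (N : A →ₗ[F] A) (S : V →ₗ[F] V) : Prop :=
  IsOOp mul l r T ∧ IsNijPair mul l r N S ∧ N ∘ₗ T = T ∘ₗ S ∧
  ∀ u v : V, dia l r (N ∘ₗ T) u v = diaS l r T S u v

/-- `(T, N, S)` is an O-dual-N structure on `(A, mul)` with bimodule `(V; l, r)`. -/
def IsODualNStruct (mul : A →ₗ[F] A →ₗ[F] A) (l r : A →ₗ[F] Module.End F V)
    (T : V →ₗ[F] A) (N : A →ₗ[F] A) (S : V →ₗ[F] V) : Prop :=
  IsOOp mul l r T ∧ IsDualNijPair mul l r N S ∧ N ∘ₗ T = T ∘ₗ S ∧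
  ∀ u v : V, dia l r (N ∘ₗ T) u v = diaS l r T S u v

end Defs


section AuxProof

open LinearMap

variable {F : Type*} [Field F]
variable {A : Type*} [AddCommGroup A] [Module F A]

/-- Contract the first factor of a tensor against a dual vector. -/
noncomputable def psiAux (N : Type*) [AddCommGroup N] [Module F N] :
    A ⊗[F] N →ₗ[F] Module.Dual F A →ₗ[F] N :=
  dualTensorHom F (Module.Dual F A) N ∘ₗ
    TensorProduct.map (Module.Dual.eval F A) LinearMap.id

@[simp] lemma psiAux_tmul {N : Type*} [AddCommGroup N] [Module F N]
    (x : A) (n : N) (g : Module.Dual F A) :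
    psiAux N (x ⊗ₜ[F] n) g = g x • n := by
  simp [psiAux]

lemma psiAux_injective [FiniteDimensional F A]
    (N : Type*) [AddCommGroup N] [Module F N] :
    Function.Injective (psiAux (F := F) (A := A) N) := by
  have h1 : Function.Injective (dualTensorHom F (Module.Dual F A) N) := by
    intro t t' htt
    exact (dualTensorHomEquivOfBasis (N := N)
      (Module.Free.chooseBasis F (Module.Dual F A))).injective
      (by rw [dualTensorHomEquivOfBasis_apply, dualTensorHomEquivOfBasis_apply, htt])
  have key : (TensorProduct.congr (Module.evalEquiv F A)
      (LinearEquiv.refl F N)).toLinearMap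
      = TensorProduct.map (Module.Dual.eval F A) LinearMap.id := by
    apply TensorProduct.ext'
    intro x n
    simp
  have h2 : Function.Injective
      (TensorProduct.map (Module.Dual.eval F A) (LinearMap.id : N →ₗ[F] N)) := by
    rw [← key]
    exact (TensorProduct.congr (Module.evalEquiv F A) (LinearEquiv.refl F N)).injective
  exact h1.comp h2

/-- `psi (a ⊗ b ⊗ c) g h = g b • h c • a`. -/
noncomputable def psi :
    A ⊗[F] (A ⊗[F] A) →ₗ[F] Module.Dual F A →ₗ[F] Module.Dual F A →ₗ[F] A :=
  LinearMap.llcomp F (Module.Dual F A) (A ⊗[F] A) (Module.Dual F A →ₗ[F] A)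
      (psiAux A) ∘ₗ
    psiAux (A ⊗[F] A) ∘ₗ
    ((TensorProduct.assoc F A A A).toLinearMap ∘ₗ
      (TensorProduct.comm F A (A ⊗[F] A)).toLinearMap)

@[simp] lemma psi_tmul (a b c : A) (g h : Module.Dual F A) :
    psi (a ⊗ₜ[F] (b ⊗ₜ[F] c)) g h = g b • h c • a := by
  simp [psi]

lemma psi_injective [FiniteDimensional F A] :
    Function.Injective (psi (F := F) (A := A)) := by
  have h1 : Function.Injective
      (LinearMap.llcomp F (Module.Dual F A) (A ⊗[F] A)
        (Module.Dual F A →ₗ[F] A) (σ₁₂ := RingHom.id F) (σ₁₃ := RingHom.id F) (psiAux A)) := by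
    intro f f' hff
    ext g : 1
    exact psiAux_injective A (LinearMap.congr_fun hff g)
  have h2 : Function.Injective (psiAux (F := F) (A := A) (A ⊗[F] A)) :=
    psiAux_injective _
  have h3 : Function.Injective
      (((TensorProduct.assoc F A A A).toLinearMap ∘ₗ
        (TensorProduct.comm F A (A ⊗[F] A)).toLinearMap) :
        A ⊗[F] (A ⊗[F] A) →ₗ[F] A ⊗[F] (A ⊗[F] A)) := by
    rw [LinearMap.coe_comp, LinearEquiv.coe_coe, LinearEquiv.coe_coe]
    exact (TensorProduct.assoc F A A A).injective.comp
      (TensorProduct.comm F A (A ⊗[F] A)).injective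
  rw [psi, LinearMap.coe_comp, LinearMap.coe_comp]
  exact h1.comp (h2.comp h3)

@[simp] lemma trMap_tmul (x y : A) (g : Module.Dual F A) :
    trMap (x ⊗ₜ[F] y) g = g y • x := by
  simp [trMap]

lemma trMap_add (r s : A ⊗[F] A) :
    trMap (F := F) (r + s) = trMap r + trMap s := by
  simp [trMap, map_add]

lemma trMap_smul (c : F) (r : A ⊗[F] A) :
    trMap (c • r) = c • trMap r := by
  simp [trMap, map_smul]

/-- The right-hand side of the key identity, as a function of `r`, `s`. -/
noncomputable def rhsInner (mul : A →ₗ[F] A →ₗ[F] A) (r s : A ⊗[F] A) :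
    Module.Dual F A →ₗ[F] Module.Dual F A →ₗ[F] A :=
  LinearMap.mk₂ F (fun g h =>
      -(mul (trMap r g) (trMap s h))
      + trMap r ((dualRepSub mul mul.flip) (trMap (TensorProduct.comm F A A s) g) h)
      + trMap r ((dualRepNeg mul.flip) (trMap s h) g))
    (fun g g' h => by
      simp only [map_add, LinearMap.add_apply]
      abel)
    (fun c g h => by
      simp only [map_smul, LinearMap.smul_apply, smul_add, smul_neg])
    (fun g h h' => by
      simp only [map_add, LinearMap.add_apply]
      abel)
    (fun c g h => by
      simp only [map_smul, LinearMap.smul_apply, smul_add, smul_neg])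

lemma rhsInner_apply (mul : A →ₗ[F] A →ₗ[F] A) (r s : A ⊗[F] A)
    (g h : Module.Dual F A) :
    rhsInner mul r s g h =
      -(mul (trMap r g) (trMap s h))
      + trMap r ((dualRepSub mul mul.flip) (trMap (TensorProduct.comm F A A s) g) h)
      + trMap r ((dualRepNeg mul.flip) (trMap s h) g) := rfl

/-- The right-hand side of the key identity, as a bilinear map in `r`, `s`. -/
noncomputable def rhsBil (mul : A →ₗ[F] A →ₗ[F] A) :
    (A ⊗[F] A) →ₗ[F] (A ⊗[F] A) →ₗ[F]
      (Module.Dual F A →ₗ[F] Module.Dual F A →ₗ[F] A) :=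
  LinearMap.mk₂ F (rhsInner mul)
    (fun r r' s => by
      ext g h
      simp only [rhsInner_apply, LinearMap.add_apply, trMap_add, map_add]
      abel)
    (fun c r s => by
      ext g h
      simp only [rhsInner_apply, LinearMap.smul_apply, trMap_smul, map_smul,
        smul_add, smul_neg])
    (fun r s s' => by
      ext g h
      simp only [rhsInner_apply, LinearMap.add_apply, trMap_add, map_add]
      abel)
    (fun c r s => by
      ext g h
      simp only [rhsInner_apply, LinearMap.smul_apply, trMap_smul, map_smul,
        smul_add, smul_neg])

/-- The CYBE left-hand side as a linear map of `r ⊗ r`. -/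
noncomputable def bigmap (mul : A →ₗ[F] A →ₗ[F] A) :
    (A ⊗[F] A) ⊗[F] (A ⊗[F] A) →ₗ[F] A ⊗[F] (A ⊗[F] A) :=
  -(TensorProduct.map (TensorProduct.lift mul) LinearMap.id ∘ₗ
      (TensorProduct.tensorTensorTensorComm F A A A A).toLinearMap)
  + (TensorProduct.map LinearMap.id
      (TensorProduct.map (TensorProduct.lift mul) LinearMap.id) ∘ₗ
      TensorProduct.map LinearMap.id (TensorProduct.assoc F A A A).symm.toLinearMap ∘ₗ
      (TensorProduct.assoc F A A (A ⊗[F] A)).toLinearMap)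
  + (TensorProduct.map LinearMap.id (TensorProduct.map LinearMap.id
      (TensorProduct.lift mul -
        TensorProduct.lift mul ∘ₗ (TensorProduct.comm F A A).toLinearMap)) ∘ₗ
      (TensorProduct.assoc F A A (A ⊗[F] A)).toLinearMap ∘ₗ
      (TensorProduct.tensorTensorTensorComm F A A A A).toLinearMap)

lemma cybeLHS_eq_bigmap (mul : A →ₗ[F] A →ₗ[F] A) (r : A ⊗[F] A) :
    cybeLHS mul r = bigmap mul (r ⊗ₜ[F] r) := by
  simp only [cybeLHS, bigmap, LinearMap.add_apply, LinearMap.neg_apply,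
    LinearMap.coe_comp, Function.comp_apply, LinearEquiv.coe_coe]

/-- The key identity relating the CYBE expression with the O-operator defect. -/
lemma keyMap (mul : A →ₗ[F] A →ₗ[F] A) :
    (psi (F := F) (A := A)) ∘ₗ (bigmap mul)
      = TensorProduct.lift (rhsBil mul) := by
  ext x y z w g h
  simp only [TensorProduct.AlgebraTensorModule.curry_apply, TensorProduct.curry_apply,
    LinearMap.coe_restrictScalars,
    LinearMap.coe_comp, Function.comp_apply, LinearMap.llcomp_apply,
    TensorProduct.lift.tmul, LinearMap.mk₂_apply, rhsBil, rhsInner_apply,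
    bigmap, LinearMap.add_apply, LinearMap.neg_apply, LinearEquiv.coe_coe,
    TensorProduct.tensorTensorTensorComm_tmul, TensorProduct.map_tmul,
    LinearMap.id_coe, id_eq, TensorProduct.assoc_tmul, TensorProduct.assoc_symm_tmul,
    TensorProduct.comm_tmul, LinearMap.sub_apply, TensorProduct.tmul_sub,
    map_add, map_neg, map_sub, psi_tmul, trMap_tmul,
    dualRepSub, dualRepNeg, LinearMap.coe_mk, AddHom.coe_mk, map_smul,
    LinearMap.smul_apply, LinearMap.sub_apply, LinearMap.neg_apply,
    LinearMap.dualMap_apply, LinearMap.flip_apply, smul_smul, LinearMap.map_smul₂,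
    smul_eq_mul]
  module

lemma keyPt (mul : A →ₗ[F] A →ₗ[F] A) (r s : A ⊗[F] A) (g h : Module.Dual F A) :
    psi (bigmap mul (r ⊗ₜ[F] s)) g h = rhsInner mul r s g h := by
  have := LinearMap.congr_fun (keyMap mul) (r ⊗ₜ[F] s)
  rw [LinearMap.comp_apply, TensorProduct.lift.tmul] at this
  rw [this]
  rfl

end AuxProof

/-- a symmetric `r ∈ A ⊗ A` is a solution of the analogue of the CYBE on a
finite-dimensional pre-Malcev algebra `A` over a field of characteristic zero iff
`T_r` is an O-operator associated to the bimodule `(A*; L* - R*, -R*)`. -/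
theorem stmt0 {F A : Type*} [Field F] [CharZero F] [AddCommGroup A] [Module F A]
    [FiniteDimensional F A]
    (mul : A →ₗ[F] A →ₗ[F] A) (hA : PreMalcevFn fun x y => mul x y)
    (r : A ⊗[F] A) (hr : TensorProduct.comm F A A r = r) :
    IsCYBE mul r ↔
      IsOOp mul (dualRepSub mul mul.flip) (dualRepNeg mul.flip) (trMap r) := by
  have hkey : ∀ g h : Module.Dual F A,
      psi (cybeLHS mul r) g h
        = -(mul (trMap r g) (trMap r h))
          + trMap r ((dualRepSub mul mul.flip) (trMap r g) h)
          + trMap r ((dualRepNeg mul.flip) (trMap r h) g) := by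
    intro g h
    rw [cybeLHS_eq_bigmap, keyPt, rhsInner_apply, hr]
  constructor
  · intro hc g h
    have h0 := hkey g h
    rw [hc, map_zero] at h0
    simp only [LinearMap.zero_apply] at h0
    rw [map_add]
    rw [add_assoc] at h0
    exact (neg_add_eq_zero.mp h0.symm)
  · intro hop
    have h0 : psi (cybeLHS mul r) = 0 := by
      ext g h
      rw [hkey g h]
      have := hop g h
      rw [map_add] at this
      simp only [LinearMap.zero_apply]
      rw [add_assoc, ← this, neg_add_cancel]
    have := psi_injective (F := F) (A := A) (by rw [h0, map_zero] : psi (cybeLHS mul r) = psi 0)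
    exact this
end

section
/- Let (V; ℓ, 𝔯) be a bimodule of a finite-dimensional pre-Malcev algebra A over a field F of characteristic zero, with V finite-dimensional, and let T : V → A be a linear map. Fix a basis {v_1,…,v_n} of V with dual basis {ξ_1,…,ξ_n} of V*, and set s_T = Σ_i T(v_i) ⊗ ξ_i + Σ_i ξ_i ⊗ T(v_i) ∈ (A ⊕ V*) ⊗ (A ⊕ V*). Then T is an O-operator of A associated to (V; ℓ, 𝔯) if and only if s_T is a solution of the analogue of the classical Yang–Baxter equation on the semi-direct product pre-Malcev algebra A ⋉_{ℓ*−𝔯*, −𝔯*} V*. -/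
open TensorProduct

namespace Stmt1Aux
open TensorProduct

variable {F : Type*} [Field F]

section Phi
variable {B : Type*} [AddCommGroup B] [Module F B]

noncomputable def Phi1 (m : B →ₗ[F] B →ₗ[F] B) :
    ((B ⊗[F] B) ⊗[F] (B ⊗[F] B)) →ₗ[F] B ⊗[F] (B ⊗[F] B) :=
  (TensorProduct.map (TensorProduct.lift m) LinearMap.id).comp
    (TensorProduct.tensorTensorTensorComm F B B B B).toLinearMap

noncomputable def Phi2 (m : B →ₗ[F] B →ₗ[F] B) :
    ((B ⊗[F] B) ⊗[F] (B ⊗[F] B)) →ₗ[F] B ⊗[F] (B ⊗[F] B) :=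
  ((TensorProduct.map LinearMap.id (TensorProduct.map (TensorProduct.lift m) LinearMap.id)).comp
    (TensorProduct.map LinearMap.id (TensorProduct.assoc F B B B).symm.toLinearMap)).comp
    (TensorProduct.assoc F B B (B ⊗[F] B)).toLinearMap

noncomputable def Phi3 (m : B →ₗ[F] B →ₗ[F] B) :
    ((B ⊗[F] B) ⊗[F] (B ⊗[F] B)) →ₗ[F] B ⊗[F] (B ⊗[F] B) :=
  ((TensorProduct.map LinearMap.id (TensorProduct.map LinearMap.id
      (TensorProduct.lift m - TensorProduct.lift m ∘ₗ (TensorProduct.comm F B B).toLinearMap))).comp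
    (TensorProduct.assoc F B B (B ⊗[F] B)).toLinearMap).comp
    (TensorProduct.tensorTensorTensorComm F B B B B).toLinearMap

lemma cybeLHS_eq (m : B →ₗ[F] B →ₗ[F] B) (s : B ⊗[F] B) :
    cybeLHS m s = -Phi1 m (s ⊗ₜ[F] s) + Phi2 m (s ⊗ₜ[F] s) + Phi3 m (s ⊗ₜ[F] s) := rfl

lemma cybeLHS_eq' (m : B →ₗ[F] B →ₗ[F] B) (s : B ⊗[F] B) (X Y Z S : B ⊗[F] (B ⊗[F] B))
    (h1 : Phi1 m (s ⊗ₜ[F] s) = X) (h2 : Phi2 m (s ⊗ₜ[F] s) = Y)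
    (h3 : Phi3 m (s ⊗ₜ[F] s) = Z) (h : Y + Z = S + X) :
    cybeLHS m s = S := by
  rw [cybeLHS_eq, h1, h2, h3]
  calc -X + Y + Z = (Y + Z) - X := by abel
    _ = (S + X) - X := by rw [h]
    _ = S := by abel

lemma Phi1_tmul (m : B →ₗ[F] B →ₗ[F] B) (p q u w : B) :
    Phi1 m ((p ⊗ₜ[F] q) ⊗ₜ[F] (u ⊗ₜ[F] w)) = (m p u) ⊗ₜ[F] (q ⊗ₜ[F] w) := by
  simp [Phi1]

lemma Phi2_tmul (m : B →ₗ[F] B →ₗ[F] B) (p q u w : B) :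
    Phi2 m ((p ⊗ₜ[F] q) ⊗ₜ[F] (u ⊗ₜ[F] w)) = p ⊗ₜ[F] ((m q u) ⊗ₜ[F] w) := by
  simp [Phi2]

lemma Phi3_tmul (m : B →ₗ[F] B →ₗ[F] B) (p q u w : B) :
    Phi3 m ((p ⊗ₜ[F] q) ⊗ₜ[F] (u ⊗ₜ[F] w)) = p ⊗ₜ[F] (u ⊗ₜ[F] (m q w - m w q)) := by
  simp [Phi3]

lemma pointwise {A : Type*} [AddCommGroup A] [Module F A] (φ : A →ₗ[F] B) (c d : B)
    (a a' L L' R R' : A) :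
    φ R ⊗ₜ[F] (c ⊗ₜ[F] d) + c ⊗ₜ[F] (φ a ⊗ₜ[F] d) + c ⊗ₜ[F] (d ⊗ₜ[F] φ (R' - L))
      + (φ L ⊗ₜ[F] (c ⊗ₜ[F] d) + c ⊗ₜ[F] (φ (-L) ⊗ₜ[F] d) + c ⊗ₜ[F] (d ⊗ₜ[F] φ (a - a')))
    = φ (-(a - (L + R))) ⊗ₜ[F] (c ⊗ₜ[F] d) + c ⊗ₜ[F] (φ (a - (L + R)) ⊗ₜ[F] d)
        + c ⊗ₜ[F] (d ⊗ₜ[F] φ ((a - (L + R)) - (a' - (L' + R'))))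
      + (φ a ⊗ₜ[F] (c ⊗ₜ[F] d) + c ⊗ₜ[F] (φ R ⊗ₜ[F] d) + c ⊗ₜ[F] (d ⊗ₜ[F] φ (R - L'))) := by
  simp only [map_sub, map_add, map_neg, TensorProduct.tmul_sub, TensorProduct.sub_tmul,
    TensorProduct.tmul_add, TensorProduct.add_tmul, TensorProduct.neg_tmul,
    TensorProduct.tmul_neg]
  abel

end Phi

section Swap
variable {A V : Type*} [AddCommGroup A] [Module F A] [AddCommGroup V] [Module F V]

lemma swap_sum {n : ℕ} (b : Module.Basis (Fin n) F V) (T : V →ₗ[F] A) (S : V →ₗ[F] V)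
    {M : Type*} [AddCommMonoid M] [Module F M] (ψ : A →ₗ[F] Module.Dual F V →ₗ[F] M) :
    ∑ i, ψ (T (b i)) ((b.dualBasis i).comp S) = ∑ i, ψ (T (S (b i))) (b.dualBasis i) := by
  classical
  have hexp : ∀ i : Fin n, (b.dualBasis i).comp S
      = ∑ k, (b.dualBasis i) (S (b k)) • b.dualBasis k := by
    intro i
    refine Eq.symm ?_
    conv_rhs => rw [← b.dualBasis.sum_repr ((b.dualBasis i).comp S)]
    refine Finset.sum_congr rfl fun k _ => ?_
    rw [Module.Basis.dualBasis_repr]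
    rfl
  calc ∑ i, ψ (T (b i)) ((b.dualBasis i).comp S)
      = ∑ i, ∑ k, (b.dualBasis i) (S (b k)) • ψ (T (b i)) (b.dualBasis k) := by
        refine Finset.sum_congr rfl fun i _ => ?_
        rw [hexp i, map_sum]
        simp only [map_smul]
    _ = ∑ k, ∑ i, (b.dualBasis i) (S (b k)) • ψ (T (b i)) (b.dualBasis k) := Finset.sum_comm
    _ = ∑ k, ψ (T (S (b k))) (b.dualBasis k) := by
        refine Finset.sum_congr rfl fun k _ => ?_
        have hrep : ∑ i, (b.dualBasis i) (S (b k)) • (b i) = S (b k) := by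
          simp only [Module.Basis.dualBasis_apply]
          exact b.sum_repr _
        calc ∑ i, (b.dualBasis i) (S (b k)) • ψ (T (b i)) (b.dualBasis k)
            = ((ψ.flip (b.dualBasis k)).comp T) (∑ i, (b.dualBasis i) (S (b k)) • b i) := by
              rw [map_sum]
              simp only [map_smul]
              rfl
          _ = ψ (T (S (b k))) (b.dualBasis k) := by rw [hrep]; rfl

end Swap

section Prod
variable {A V : Type*} [AddCommGroup A] [Module F A] [AddCommGroup V] [Module F V]

/-- embedding of `A` in `A × V*` -/
noncomputable def iA : A →ₗ[F] A × Module.Dual F V := LinearMap.inl F A (Module.Dual F V)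

/-- embedding of `V*` in `A × V*` -/
noncomputable def iD : Module.Dual F V →ₗ[F] A × Module.Dual F V :=
  LinearMap.inr F A (Module.Dual F V)

@[simp] lemma iA_apply (x : A) : (iA x : A × Module.Dual F V) = (x, 0) := rfl

@[simp] lemma iD_apply (η : Module.Dual F V) : (iD η : A × Module.Dual F V) = (0, η) := rfl

variable (mul : A →ₗ[F] A →ₗ[F] A) (l r : A →ₗ[F] Module.End F V)

lemma M_aa (x y : A) :
    sdMul mul (dualRepSub l r) (dualRepNeg r) (iA x) (iA y) = iA (mul x y) := by
  simp [sdMul, sdFn, Prod.ext_iff, dualRepSub, dualRepNeg]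

lemma M_ac (x : A) (η : Module.Dual F V) :
    sdMul mul (dualRepSub l r) (dualRepNeg r) (iA x) (iD η) = iD (η ∘ₗ (r x - l x)) := by
  refine Prod.ext (by simp [sdMul, sdFn]) ?_
  ext v
  simp [sdMul, sdFn, dualRepSub, dualRepNeg]
  abel

lemma M_ca (η : Module.Dual F V) (y : A) :
    sdMul mul (dualRepSub l r) (dualRepNeg r) (iD η) (iA y) = iD (η ∘ₗ (r y)) := by
  refine Prod.ext (by simp [sdMul, sdFn]) ?_
  ext v
  simp [sdMul, sdFn, dualRepSub, dualRepNeg]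

lemma M_cc (η θ : Module.Dual F V) :
    sdMul mul (dualRepSub l r) (dualRepNeg r) (iD η) (iD θ) = 0 := by
  refine Prod.ext (by simp [sdMul, sdFn]) ?_
  ext v
  simp [sdMul, sdFn, dualRepSub, dualRepNeg]

end Prod


section Shapes
variable {A V : Type*} [AddCommGroup A] [Module F A] [AddCommGroup V] [Module F V]
variable {n : ℕ} (b : Module.Basis (Fin n) F V) (T : V →ₗ[F] A) (S : V →ₗ[F] V)
  (w : (A × Module.Dual F V))

local notation "W" => A × Module.Dual F V

private noncomputable abbrev mk1 : W →ₗ[F] W →ₗ[F] (W ⊗[F] W) := TensorProduct.mk F W W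
private noncomputable abbrev mk2 : W →ₗ[F] (W ⊗[F] W) →ₗ[F] (W ⊗[F] (W ⊗[F] W)) :=
  TensorProduct.mk F W (W ⊗[F] W)

lemma swap1 :
    ∑ i, ((iA (T (b i)) : W) ⊗ₜ[F] ((iD ((b.dualBasis i) ∘ₗ S) : W) ⊗ₜ[F] w))
      = ∑ i, ((iA (T (S (b i))) : W) ⊗ₜ[F] ((iD (b.dualBasis i) : W) ⊗ₜ[F] w)) :=
  swap_sum b T S ((mk2.comp iA).compl₂ ((mk1.flip w).comp iD))

lemma swap2 :
    ∑ i, ((iA (T (b i)) : W) ⊗ₜ[F] (w ⊗ₜ[F] (iD ((b.dualBasis i) ∘ₗ S) : W)))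
      = ∑ i, ((iA (T (S (b i))) : W) ⊗ₜ[F] (w ⊗ₜ[F] (iD (b.dualBasis i) : W))) :=
  swap_sum b T S ((mk2.comp iA).compl₂ ((mk1 w).comp iD))

lemma swap3 :
    ∑ i, ((iD ((b.dualBasis i) ∘ₗ S) : W) ⊗ₜ[F] ((iA (T (b i)) : W) ⊗ₜ[F] w))
      = ∑ i, ((iD (b.dualBasis i) : W) ⊗ₜ[F] ((iA (T (S (b i))) : W) ⊗ₜ[F] w)) :=
  swap_sum b T S (((mk2.comp iD).compl₂ ((mk1.flip w).comp iA)).flip)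

lemma swap4 :
    ∑ i, (w ⊗ₜ[F] ((iA (T (b i)) : W) ⊗ₜ[F] (iD ((b.dualBasis i) ∘ₗ S) : W)))
      = ∑ i, (w ⊗ₜ[F] ((iA (T (S (b i))) : W) ⊗ₜ[F] (iD (b.dualBasis i) : W))) :=
  swap_sum b T S (((mk1.comp iA).compl₂ iD).compr₂ (mk2 w))

lemma swap5 :
    ∑ i, ((iD ((b.dualBasis i) ∘ₗ S) : W) ⊗ₜ[F] (w ⊗ₜ[F] (iA (T (b i)) : W)))
      = ∑ i, ((iD (b.dualBasis i) : W) ⊗ₜ[F] (w ⊗ₜ[F] (iA (T (S (b i))) : W))) :=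
  swap_sum b T S (((mk2.comp iD).compl₂ ((mk1 w).comp iA)).flip)

lemma swap6 :
    ∑ i, (w ⊗ₜ[F] ((iD ((b.dualBasis i) ∘ₗ S) : W) ⊗ₜ[F] (iA (T (b i)) : W)))
      = ∑ i, (w ⊗ₜ[F] ((iD (b.dualBasis i) : W) ⊗ₜ[F] (iA (T (S (b i))) : W))) :=
  swap_sum b T S ((((mk1.comp iD).compl₂ iA).compr₂ (mk2 w)).flip)

end Shapes
section SumTmul
variable {B : Type*} [AddCommGroup B] [Module F B]

lemma sum_tmul_sum {m k : ℕ} (f g : Fin m → B) (f' g' : Fin k → B) :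
    (∑ i, f i ⊗ₜ[F] g i) ⊗ₜ[F] (∑ j, f' j ⊗ₜ[F] g' j)
      = ∑ i, ∑ j, ((f i ⊗ₜ[F] g i) ⊗ₜ[F] (f' j ⊗ₜ[F] g' j)) := by
  rw [TensorProduct.sum_tmul]
  exact Finset.sum_congr rfl fun i _ => TensorProduct.tmul_sum _ _ _

end SumTmul

section Key
variable {A V : Type*} [AddCommGroup A] [Module F A] [AddCommGroup V] [Module F V]
variable (mul : A →ₗ[F] A →ₗ[F] A) (l r : A →ₗ[F] Module.End F V) (T : V →ₗ[F] A)
variable {n : ℕ} (b : Module.Basis (Fin n) F V)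

local notation "W" => A × Module.Dual F V

/-- the defect of `T` being an O-operator, at basis vectors -/
noncomputable def Edef (i j : Fin n) : A :=
  mul (T (b i)) (T (b j)) - T (l (T (b i)) (b j) + r (T (b j)) (b i))

set_option maxHeartbeats 2000000 in
lemma key :
    cybeLHS (sdMul mul (dualRepSub l r) (dualRepNeg r))
        ((∑ i, (iA (T (b i)) : W) ⊗ₜ[F] (iD (b.dualBasis i) : W))
          + ∑ i, (iD (b.dualBasis i) : W) ⊗ₜ[F] (iA (T (b i)) : W))
      = ∑ i, ∑ j,
          (((iA (-(Edef mul l r T b i j)) : W) ⊗ₜ[F]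
              ((iD (b.dualBasis i) : W) ⊗ₜ[F] (iD (b.dualBasis j) : W)))
            + (iD (b.dualBasis i) : W) ⊗ₜ[F]
              ((iA (Edef mul l r T b i j) : W) ⊗ₜ[F] (iD (b.dualBasis j) : W))
            + (iD (b.dualBasis i) : W) ⊗ₜ[F]
              ((iD (b.dualBasis j) : W) ⊗ₜ[F]
                (iA (Edef mul l r T b i j - Edef mul l r T b j i) : W))) := by
  classical
  set M' := sdMul mul (dualRepSub l r) (dualRepNeg r) with hM'
  set sa := ∑ i, (iA (T (b i)) : W) ⊗ₜ[F] (iD (b.dualBasis i) : W) with hsa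
  set sb := ∑ i, (iD (b.dualBasis i) : W) ⊗ₜ[F] (iA (T (b i)) : W) with hsb
  have hss : (sa + sb) ⊗ₜ[F] (sa + sb)
      = (∑ i, ∑ j, (((iA (T (b i)) : W) ⊗ₜ[F] (iD (b.dualBasis i) : W)) ⊗ₜ[F]
            ((iA (T (b j)) : W) ⊗ₜ[F] (iD (b.dualBasis j) : W))))
        + (∑ i, ∑ j, (((iD (b.dualBasis i) : W) ⊗ₜ[F] (iA (T (b i)) : W)) ⊗ₜ[F]
            ((iA (T (b j)) : W) ⊗ₜ[F] (iD (b.dualBasis j) : W))))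
        + ((∑ i, ∑ j, (((iA (T (b i)) : W) ⊗ₜ[F] (iD (b.dualBasis i) : W)) ⊗ₜ[F]
            ((iD (b.dualBasis j) : W) ⊗ₜ[F] (iA (T (b j)) : W))))
          + (∑ i, ∑ j, (((iD (b.dualBasis i) : W) ⊗ₜ[F] (iA (T (b i)) : W)) ⊗ₜ[F]
            ((iD (b.dualBasis j) : W) ⊗ₜ[F] (iA (T (b j)) : W))))) := by
    rw [hsa, hsb, TensorProduct.tmul_add, TensorProduct.add_tmul, TensorProduct.add_tmul,
      sum_tmul_sum, sum_tmul_sum, sum_tmul_sum, sum_tmul_sum]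
  have split : ∀ (Φ : ((W ⊗[F] W) ⊗[F] (W ⊗[F] W)) →ₗ[F] (W ⊗[F] (W ⊗[F] W))),
      Φ ((sa + sb) ⊗ₜ[F] (sa + sb))
        = (∑ i, ∑ j, Φ (((iA (T (b i)) : W) ⊗ₜ[F] (iD (b.dualBasis i) : W)) ⊗ₜ[F]
            ((iA (T (b j)) : W) ⊗ₜ[F] (iD (b.dualBasis j) : W))))
          + (∑ i, ∑ j, Φ (((iD (b.dualBasis i) : W) ⊗ₜ[F] (iA (T (b i)) : W)) ⊗ₜ[F]
            ((iA (T (b j)) : W) ⊗ₜ[F] (iD (b.dualBasis j) : W))))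
          + ((∑ i, ∑ j, Φ (((iA (T (b i)) : W) ⊗ₜ[F] (iD (b.dualBasis i) : W)) ⊗ₜ[F]
            ((iD (b.dualBasis j) : W) ⊗ₜ[F] (iA (T (b j)) : W))))
            + (∑ i, ∑ j, Φ (((iD (b.dualBasis i) : W) ⊗ₜ[F] (iA (T (b i)) : W)) ⊗ₜ[F]
            ((iD (b.dualBasis j) : W) ⊗ₜ[F] (iA (T (b j)) : W))))) := by
    intro Φ
    rw [hss]
    simp only [map_add, map_sum]
  -- Phi1
  have H1 : Phi1 M' ((sa + sb) ⊗ₜ[F] (sa + sb))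
      = (∑ i, ∑ j, ((iA (mul (T (b i)) (T (b j))) : W) ⊗ₜ[F]
            ((iD (b.dualBasis i) : W) ⊗ₜ[F] (iD (b.dualBasis j) : W))))
        + (∑ i, ∑ j, ((iD (b.dualBasis i) : W) ⊗ₜ[F]
            ((iA (T ((r (T (b j))) (b i))) : W) ⊗ₜ[F] (iD (b.dualBasis j) : W))))
        + (∑ i, ∑ j, ((iD (b.dualBasis i) : W) ⊗ₜ[F]
            ((iD (b.dualBasis j) : W) ⊗ₜ[F]
              (iA (T (((r (T (b j))) - (l (T (b j)))) (b i))) : W)))) := by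
    rw [split (Phi1 M')]
    have haa : (∑ i, ∑ j, Phi1 M' (((iA (T (b i)) : W) ⊗ₜ[F] (iD (b.dualBasis i) : W)) ⊗ₜ[F]
          ((iA (T (b j)) : W) ⊗ₜ[F] (iD (b.dualBasis j) : W))))
        = ∑ i, ∑ j, ((iA (mul (T (b i)) (T (b j))) : W) ⊗ₜ[F]
            ((iD (b.dualBasis i) : W) ⊗ₜ[F] (iD (b.dualBasis j) : W))) := by
      simp only [Phi1_tmul, hM', M_aa]
    have hba : (∑ i, ∑ j, Phi1 M' (((iD (b.dualBasis i) : W) ⊗ₜ[F] (iA (T (b i)) : W)) ⊗ₜ[F]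
          ((iA (T (b j)) : W) ⊗ₜ[F] (iD (b.dualBasis j) : W))))
        = ∑ i, ∑ j, ((iD (b.dualBasis i) : W) ⊗ₜ[F]
            ((iA (T ((r (T (b j))) (b i))) : W) ⊗ₜ[F] (iD (b.dualBasis j) : W))) := by
      calc _ = ∑ i, ∑ j, ((iD ((b.dualBasis i) ∘ₗ (r (T (b j)))) : W) ⊗ₜ[F]
                ((iA (T (b i)) : W) ⊗ₜ[F] (iD (b.dualBasis j) : W))) := by
              simp only [Phi1_tmul, hM', M_ca]
        _ = ∑ j, ∑ i, ((iD ((b.dualBasis i) ∘ₗ (r (T (b j)))) : W) ⊗ₜ[F]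
                ((iA (T (b i)) : W) ⊗ₜ[F] (iD (b.dualBasis j) : W))) := Finset.sum_comm
        _ = ∑ j, ∑ i, ((iD (b.dualBasis i) : W) ⊗ₜ[F]
                ((iA (T ((r (T (b j))) (b i))) : W) ⊗ₜ[F] (iD (b.dualBasis j) : W))) :=
              Finset.sum_congr rfl fun j _ =>
                swap3 b T (r (T (b j))) (iD (b.dualBasis j) : W)
        _ = _ := Finset.sum_comm
    have hab : (∑ i, ∑ j, Phi1 M' (((iA (T (b i)) : W) ⊗ₜ[F] (iD (b.dualBasis i) : W)) ⊗ₜ[F]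
          ((iD (b.dualBasis j) : W) ⊗ₜ[F] (iA (T (b j)) : W))))
        = ∑ i, ∑ j, ((iD (b.dualBasis i) : W) ⊗ₜ[F]
            ((iD (b.dualBasis j) : W) ⊗ₜ[F]
              (iA (T (((r (T (b j))) - (l (T (b j)))) (b i))) : W))) := by
      calc _ = ∑ i, ∑ j, ((iD ((b.dualBasis j) ∘ₗ ((r (T (b i))) - (l (T (b i))))) : W) ⊗ₜ[F]
                ((iD (b.dualBasis i) : W) ⊗ₜ[F] (iA (T (b j)) : W))) := by
              simp only [Phi1_tmul, hM', M_ac]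
        _ = ∑ i, ∑ j, ((iD (b.dualBasis j) : W) ⊗ₜ[F]
                ((iD (b.dualBasis i) : W) ⊗ₜ[F]
                  (iA (T (((r (T (b i))) - (l (T (b i)))) (b j))) : W))) :=
              Finset.sum_congr rfl fun i _ =>
                swap5 b T ((r (T (b i))) - (l (T (b i)))) (iD (b.dualBasis i) : W)
        _ = _ := Finset.sum_comm
    have hbb : (∑ i, ∑ j, Phi1 M' (((iD (b.dualBasis i) : W) ⊗ₜ[F] (iA (T (b i)) : W)) ⊗ₜ[F]
          ((iD (b.dualBasis j) : W) ⊗ₜ[F] (iA (T (b j)) : W))))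
        = 0 := by
      simp only [Phi1_tmul, hM', M_cc, TensorProduct.zero_tmul, Finset.sum_const_zero]
    rw [haa, hba, hab, hbb]
    abel
  -- Phi2
  have H2 : Phi2 M' ((sa + sb) ⊗ₜ[F] (sa + sb))
      = (∑ i, ∑ j, ((iA (T ((r (T (b j))) (b i))) : W) ⊗ₜ[F]
            ((iD (b.dualBasis i) : W) ⊗ₜ[F] (iD (b.dualBasis j) : W))))
        + (∑ i, ∑ j, ((iD (b.dualBasis i) : W) ⊗ₜ[F]
            ((iA (mul (T (b i)) (T (b j))) : W) ⊗ₜ[F] (iD (b.dualBasis j) : W))))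
        + (∑ i, ∑ j, ((iD (b.dualBasis i) : W) ⊗ₜ[F]
            ((iD (b.dualBasis j) : W) ⊗ₜ[F]
              (iA (T (((r (T (b i))) - (l (T (b i)))) (b j))) : W)))) := by
    rw [split (Phi2 M')]
    have haa : (∑ i, ∑ j, Phi2 M' (((iA (T (b i)) : W) ⊗ₜ[F] (iD (b.dualBasis i) : W)) ⊗ₜ[F]
          ((iA (T (b j)) : W) ⊗ₜ[F] (iD (b.dualBasis j) : W))))
        = ∑ i, ∑ j, ((iA (T ((r (T (b j))) (b i))) : W) ⊗ₜ[F]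
            ((iD (b.dualBasis i) : W) ⊗ₜ[F] (iD (b.dualBasis j) : W))) := by
      calc _ = ∑ i, ∑ j, ((iA (T (b i)) : W) ⊗ₜ[F]
                ((iD ((b.dualBasis i) ∘ₗ (r (T (b j)))) : W) ⊗ₜ[F] (iD (b.dualBasis j) : W))) := by
              simp only [Phi2_tmul, hM', M_ca]
        _ = ∑ j, ∑ i, ((iA (T (b i)) : W) ⊗ₜ[F]
                ((iD ((b.dualBasis i) ∘ₗ (r (T (b j)))) : W) ⊗ₜ[F] (iD (b.dualBasis j) : W))) :=
              Finset.sum_comm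
        _ = ∑ j, ∑ i, ((iA (T ((r (T (b j))) (b i))) : W) ⊗ₜ[F]
                ((iD (b.dualBasis i) : W) ⊗ₜ[F] (iD (b.dualBasis j) : W))) :=
              Finset.sum_congr rfl fun j _ =>
                swap1 b T (r (T (b j))) (iD (b.dualBasis j) : W)
        _ = _ := Finset.sum_comm
    have hba : (∑ i, ∑ j, Phi2 M' (((iD (b.dualBasis i) : W) ⊗ₜ[F] (iA (T (b i)) : W)) ⊗ₜ[F]
          ((iA (T (b j)) : W) ⊗ₜ[F] (iD (b.dualBasis j) : W))))
        = ∑ i, ∑ j, ((iD (b.dualBasis i) : W) ⊗ₜ[F]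
            ((iA (mul (T (b i)) (T (b j))) : W) ⊗ₜ[F] (iD (b.dualBasis j) : W))) := by
      simp only [Phi2_tmul, hM', M_aa]
    have hab : (∑ i, ∑ j, Phi2 M' (((iA (T (b i)) : W) ⊗ₜ[F] (iD (b.dualBasis i) : W)) ⊗ₜ[F]
          ((iD (b.dualBasis j) : W) ⊗ₜ[F] (iA (T (b j)) : W))))
        = 0 := by
      simp only [Phi2_tmul, hM', M_cc, TensorProduct.zero_tmul, TensorProduct.tmul_zero,
        Finset.sum_const_zero]
    have hbb : (∑ i, ∑ j, Phi2 M' (((iD (b.dualBasis i) : W) ⊗ₜ[F] (iA (T (b i)) : W)) ⊗ₜ[F]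
          ((iD (b.dualBasis j) : W) ⊗ₜ[F] (iA (T (b j)) : W))))
        = ∑ i, ∑ j, ((iD (b.dualBasis i) : W) ⊗ₜ[F]
            ((iD (b.dualBasis j) : W) ⊗ₜ[F]
              (iA (T (((r (T (b i))) - (l (T (b i)))) (b j))) : W))) := by
      calc _ = ∑ i, ∑ j, ((iD (b.dualBasis i) : W) ⊗ₜ[F]
                ((iD ((b.dualBasis j) ∘ₗ ((r (T (b i))) - (l (T (b i))))) : W) ⊗ₜ[F]
                  (iA (T (b j)) : W))) := by
              simp only [Phi2_tmul, hM', M_ac]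
        _ = _ :=
              Finset.sum_congr rfl fun i _ =>
                swap6 b T ((r (T (b i))) - (l (T (b i)))) (iD (b.dualBasis i) : W)
    rw [haa, hba, hab, hbb]
    abel
  -- Phi3
  have H3 : Phi3 M' ((sa + sb) ⊗ₜ[F] (sa + sb))
      = (∑ i, ∑ j, ((iA (T ((l (T (b i))) (b j))) : W) ⊗ₜ[F]
            ((iD (b.dualBasis i) : W) ⊗ₜ[F] (iD (b.dualBasis j) : W))))
        + (∑ i, ∑ j, ((iD (b.dualBasis i) : W) ⊗ₜ[F]
            ((iA (T ((-(l (T (b i)))) (b j))) : W) ⊗ₜ[F] (iD (b.dualBasis j) : W))))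
        + (∑ i, ∑ j, ((iD (b.dualBasis i) : W) ⊗ₜ[F]
            ((iD (b.dualBasis j) : W) ⊗ₜ[F]
              (iA (mul (T (b i)) (T (b j)) - mul (T (b j)) (T (b i))) : W)))) := by
    rw [split (Phi3 M')]
    have haa : (∑ i, ∑ j, Phi3 M' (((iA (T (b i)) : W) ⊗ₜ[F] (iD (b.dualBasis i) : W)) ⊗ₜ[F]
          ((iA (T (b j)) : W) ⊗ₜ[F] (iD (b.dualBasis j) : W))))
        = 0 := by
      simp only [Phi3_tmul, hM', M_cc, sub_zero, sub_self, TensorProduct.tmul_zero,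
        Finset.sum_const_zero]
    have hab : (∑ i, ∑ j, Phi3 M' (((iA (T (b i)) : W) ⊗ₜ[F] (iD (b.dualBasis i) : W)) ⊗ₜ[F]
          ((iD (b.dualBasis j) : W) ⊗ₜ[F] (iA (T (b j)) : W))))
        = ∑ i, ∑ j, ((iA (T ((l (T (b i))) (b j))) : W) ⊗ₜ[F]
            ((iD (b.dualBasis i) : W) ⊗ₜ[F] (iD (b.dualBasis j) : W))) := by
      have hcomp : ∀ i j : Fin n,
          M' (iD (b.dualBasis i) : W) (iA (T (b j)) : W)
            - M' (iA (T (b j)) : W) (iD (b.dualBasis i) : W)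
          = (iD ((b.dualBasis i) ∘ₗ (l (T (b j)))) : W) := by
        intro i j
        rw [hM', M_ca, M_ac, ← map_sub]
        congr 1
        ext v
        simp [LinearMap.sub_apply]
      calc _ = ∑ i, ∑ j, ((iA (T (b i)) : W) ⊗ₜ[F]
                ((iD (b.dualBasis j) : W) ⊗ₜ[F]
                  (iD ((b.dualBasis i) ∘ₗ (l (T (b j)))) : W))) := by
              simp only [Phi3_tmul]
              exact Finset.sum_congr rfl fun i _ => Finset.sum_congr rfl fun j _ => by
                rw [hcomp i j]
        _ = ∑ j, ∑ i, ((iA (T (b i)) : W) ⊗ₜ[F]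
                ((iD (b.dualBasis j) : W) ⊗ₜ[F]
                  (iD ((b.dualBasis i) ∘ₗ (l (T (b j)))) : W))) := Finset.sum_comm
        _ = ∑ j, ∑ i, ((iA (T ((l (T (b j))) (b i))) : W) ⊗ₜ[F]
                ((iD (b.dualBasis j) : W) ⊗ₜ[F] (iD (b.dualBasis i) : W))) :=
              Finset.sum_congr rfl fun j _ =>
                swap2 b T (l (T (b j))) (iD (b.dualBasis j) : W)
        _ = ∑ i, ∑ j, ((iA (T ((l (T (b j))) (b i))) : W) ⊗ₜ[F]
                ((iD (b.dualBasis j) : W) ⊗ₜ[F] (iD (b.dualBasis i) : W))) := Finset.sum_comm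
        _ = _ := Finset.sum_comm
    have hba : (∑ i, ∑ j, Phi3 M' (((iD (b.dualBasis i) : W) ⊗ₜ[F] (iA (T (b i)) : W)) ⊗ₜ[F]
          ((iA (T (b j)) : W) ⊗ₜ[F] (iD (b.dualBasis j) : W))))
        = ∑ i, ∑ j, ((iD (b.dualBasis i) : W) ⊗ₜ[F]
            ((iA (T ((-(l (T (b i)))) (b j))) : W) ⊗ₜ[F] (iD (b.dualBasis j) : W))) := by
      have hcomp : ∀ i j : Fin n,
          M' (iA (T (b i)) : W) (iD (b.dualBasis j) : W)
            - M' (iD (b.dualBasis j) : W) (iA (T (b i)) : W)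
          = (iD ((b.dualBasis j) ∘ₗ (-(l (T (b i))))) : W) := by
        intro i j
        rw [hM', M_ca, M_ac, ← map_sub]
        congr 1
        ext v
        simp [LinearMap.sub_apply]
      calc _ = ∑ i, ∑ j, ((iD (b.dualBasis i) : W) ⊗ₜ[F]
                ((iA (T (b j)) : W) ⊗ₜ[F]
                  (iD ((b.dualBasis j) ∘ₗ (-(l (T (b i))))) : W))) := by
              simp only [Phi3_tmul]
              exact Finset.sum_congr rfl fun i _ => Finset.sum_congr rfl fun j _ => by
                rw [hcomp i j]
        _ = _ := Finset.sum_congr rfl fun i _ =>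
              swap4 b T (-(l (T (b i)))) (iD (b.dualBasis i) : W)
    have hbb : (∑ i, ∑ j, Phi3 M' (((iD (b.dualBasis i) : W) ⊗ₜ[F] (iA (T (b i)) : W)) ⊗ₜ[F]
          ((iD (b.dualBasis j) : W) ⊗ₜ[F] (iA (T (b j)) : W))))
        = ∑ i, ∑ j, ((iD (b.dualBasis i) : W) ⊗ₜ[F]
            ((iD (b.dualBasis j) : W) ⊗ₜ[F]
              (iA (mul (T (b i)) (T (b j)) - mul (T (b j)) (T (b i))) : W))) := by
      simp only [Phi3_tmul, hM', M_aa, ← map_sub]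
    rw [haa, hab, hba, hbb]
    abel
  refine cybeLHS_eq' M' (sa + sb) _ _ _ _ H1 H2 H3 ?_
  simp only [← Finset.sum_add_distrib]
  refine Finset.sum_congr rfl fun i _ => ?_
  refine Finset.sum_congr rfl fun j _ => ?_
  simp only [Edef, LinearMap.sub_apply, LinearMap.neg_apply, map_sub T, map_add T, map_neg T]
  exact pointwise iA (iD (b.dualBasis i)) (iD (b.dualBasis j))
    (mul (T (b i)) (T (b j))) (mul (T (b j)) (T (b i)))
    (T ((l (T (b i))) (b j))) (T ((l (T (b j))) (b i)))
    (T ((r (T (b j))) (b i))) (T ((r (T (b i))) (b j)))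

/-- evaluation of the dual component at `v` -/
noncomputable def evW (v : V) : (A × Module.Dual F V) →ₗ[F] F :=
  (LinearMap.applyₗ v).comp (LinearMap.snd F A (Module.Dual F V))

@[simp] lemma evW_apply (v : V) (p : A × Module.Dual F V) : evW v p = p.2 v := rfl

noncomputable def sigma (u v : V) :
    ((A × Module.Dual F V) ⊗[F] (A × Module.Dual F V)) →ₗ[F] F :=
  TensorProduct.lift ((LinearMap.mul F F).compl₁₂ (evW u) (evW v))

@[simp] lemma sigma_tmul (u v : V) (p q : A × Module.Dual F V) :
    sigma u v (p ⊗ₜ[F] q) = p.2 u * q.2 v := rfl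

noncomputable def theta (u v : V) :
    ((A × Module.Dual F V) ⊗[F] ((A × Module.Dual F V) ⊗[F] (A × Module.Dual F V))) →ₗ[F] A :=
  TensorProduct.lift (LinearMap.mk₂ F
    (fun p t => (sigma u v t : F) • p.1)
    (fun p p' t => by simp [smul_add])
    (fun c p t => by simp [smul_comm c])
    (fun p t t' => by simp [add_smul])
    (fun c p t => by simp [mul_smul]))

@[simp] lemma theta_tmul (u v : V) (p q w : A × Module.Dual F V) :
    theta u v (p ⊗ₜ[F] (q ⊗ₜ[F] w)) = (q.2 u * w.2 v) • p.1 := by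
  simp [theta, TensorProduct.lift.tmul]

set_option maxHeartbeats 1000000 in
lemma extract (k m : Fin n) :
    theta (b k) (b m)
        (∑ i, ∑ j,
          (((iA (-(Edef mul l r T b i j)) : W) ⊗ₜ[F]
              ((iD (b.dualBasis i) : W) ⊗ₜ[F] (iD (b.dualBasis j) : W)))
            + (iD (b.dualBasis i) : W) ⊗ₜ[F]
              ((iA (Edef mul l r T b i j) : W) ⊗ₜ[F] (iD (b.dualBasis j) : W))
            + (iD (b.dualBasis i) : W) ⊗ₜ[F]
              ((iD (b.dualBasis j) : W) ⊗ₜ[F]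
                (iA (Edef mul l r T b i j - Edef mul l r T b j i) : W))))
      = -(Edef mul l r T b k m) := by
  classical
  simp only [map_sum, map_add, theta_tmul, iA_apply, iD_apply, smul_zero, zero_add, add_zero,
    zero_mul, mul_zero, zero_smul, Module.Basis.dualBasis_apply_self]
  simp [ite_smul, Finset.sum_ite_eq, mul_ite, ite_mul, one_mul, mul_one, zero_mul, mul_zero]

end Key

end Stmt1Aux

/-- `T : V → A` is an O-operator associated to a bimodule `(V; l, r)` iff
`s_T = Σ T(v_i) ⊗ ξ_i + Σ ξ_i ⊗ T(v_i)` is a solution of the analogue of the CYBE on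
the semidirect product `A ⋉_{l*-r*, -r*} V*`. -/
theorem stmt1 {F A V : Type*} [Field F] [CharZero F]
    [AddCommGroup A] [Module F A] [FiniteDimensional F A]
    [AddCommGroup V] [Module F V] [FiniteDimensional F V]
    (mul : A →ₗ[F] A →ₗ[F] A) (hA : PreMalcevFn fun x y => mul x y)
    (l r : A →ₗ[F] Module.End F V) (hbim : IsBimodule mul l r)
    (T : V →ₗ[F] A) {n : ℕ} (b : Module.Basis (Fin n) F V) :
    IsOOp mul l r T ↔
      IsCYBE (sdMul mul (dualRepSub l r) (dualRepNeg r))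
        (∑ i : Fin n,
            (((T (b i), 0) : A × Module.Dual F V) ⊗ₜ[F]
              ((0, b.dualBasis i) : A × Module.Dual F V))
         + ∑ i : Fin n,
            (((0, b.dualBasis i) : A × Module.Dual F V) ⊗ₜ[F]
              ((T (b i), 0) : A × Module.Dual F V))) := by
  classical
  constructor
  · intro hT
    have hE : ∀ i j, Stmt1Aux.Edef mul l r T b i j = 0 := by
      intro i j
      simp [Stmt1Aux.Edef, hT (b i) (b j)]
    refine (Stmt1Aux.key mul l r T b).trans ?_
    refine Finset.sum_eq_zero fun i _ => Finset.sum_eq_zero fun j _ => ?_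
    simp [hE, Prod.mk_zero_zero]
  · intro hC
    have h0 := (Stmt1Aux.key mul l r T b).symm.trans hC
    have hE : ∀ k m, Stmt1Aux.Edef mul l r T b k m = 0 := by
      intro k m
      have h1 := congrArg (fun t => Stmt1Aux.theta (b k) (b m) t) h0
      simp only [map_zero] at h1
      have h2 := (Stmt1Aux.extract mul l r T b k m).symm.trans h1
      exact neg_eq_zero.mp h2
    intro v w
    let D : V →ₗ[F] V →ₗ[F] A := LinearMap.mk₂ F
      (fun v w => mul (T v) (T w) - T (l (T v) w + r (T w) v))
      (fun v v' w => by
        simp only [map_add, LinearMap.add_apply]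
        abel)
      (fun c v w => by
        simp only [map_smul, LinearMap.smul_apply, ← smul_add, smul_sub])
      (fun v w w' => by
        simp only [map_add, LinearMap.add_apply]
        abel)
      (fun c v w => by
        simp only [map_smul, LinearMap.smul_apply, ← smul_add, smul_sub])
    have hD0 : D = 0 := by
      refine b.ext fun i => ?_
      refine b.ext fun j => ?_
      have := hE i j
      simpa [D, Stmt1Aux.Edef] using this
    have hDvw : D v w = 0 := by rw [hD0]; simp
    have hsub : mul (T v) (T w) - T (l (T v) w + r (T w) v) = 0 := hDvw
    exact sub_eq_zero.mp hsub
end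

section
/- Let A be a finite-dimensional pre-Malcev algebra over a field F of characteristic zero and T : A* → A an invertible linear map. Define a bilinear form B : A × A → F by B(x, y) = ⟨T^{-1}(x), y⟩. Then T is an O-operator of A associated to the bimodule (A*; L* − R*, 0), i.e. T(ξ)·T(η) = T((L*_{T(ξ)} − R*_{T(ξ)})(η)) for all ξ, η ∈ A*, if and only if B(x·y, z) = −B(y, x·z − z·x) for all x, y, z ∈ A. -/
open TensorProduct

/-- for an invertible `T : A* → A` with associated bilinear form
`B(x, y) = ⟨T⁻¹ x, y⟩`, `T` is an O-operator associated to `(A*; L* - R*, 0)` iff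
`B(x·y, z) = -B(y, x·z - z·x)`. -/
theorem stmt3 {F A : Type*} [Field F] [CharZero F] [AddCommGroup A] [Module F A]
    [FiniteDimensional F A]
    (mul : A →ₗ[F] A →ₗ[F] A) (hA : PreMalcevFn fun x y => mul x y)
    (T : Module.Dual F A ≃ₗ[F] A)
    (B : A → A → F) (hB : ∀ x y : A, B x y = T.symm x y) :
    IsOOp mul (dualRepSub mul mul.flip) 0 T.toLinearMap ↔
      ∀ x y z : A, B (mul x y) z = -B y (mul x z - mul z x) := by
  have key : ∀ (x : A) (η : Module.Dual F A) (z : A),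
      (dualRepSub mul mul.flip x η) z = -(η (mul x z) - η (mul z x)) := by
    intro x η z
    simp [dualRepSub, LinearMap.dualMap, Module.Dual.transpose]
    ring
  constructor
  · intro h x y z
    have hx := h (T.symm x) (T.symm y)
    simp only [LinearEquiv.coe_coe, T.apply_symm_apply, map_zero,
      LinearMap.zero_apply, add_zero] at hx
    rw [hB, hB, hx, T.symm_apply_apply, key]
    simp
  · intro h ξ η
    apply T.symm.injective
    apply LinearMap.ext
    intro z
    have h1 := h (T ξ) (T η) z
    rw [hB, hB] at h1
    simp only [LinearEquiv.coe_coe, map_zero, LinearMap.zero_apply, add_zero,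
      T.symm_apply_apply, key]
    rw [h1, T.symm_apply_apply]
    simp
end

section
/- Let A be a finite-dimensional pre-Malcev algebra over a field F of characteristic zero and T : A* → A an invertible linear map. Define a bilinear form B : A × A → F by B(x, y) = ⟨T^{-1}(x), y⟩. Then T is an O-operator of A associated to the bimodule (A*; L* − R*, −R*), i.e. T(ξ)·T(η) = T((L*_{T(ξ)} − R*_{T(ξ)})(η) − R*_{T(η)}(ξ)) for all ξ, η ∈ A*, if and only if B(x·y, z) = −B(y, x·z) + B(y, z·x) + B(x, z·y) for all x, y, z ∈ A. -/
open TensorProduct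

/-- for an invertible `T : A* → A` with associated bilinear form
`B(x, y) = ⟨T⁻¹ x, y⟩`, `T` is an O-operator associated to `(A*; L* - R*, -R*)` iff
`B(x·y, z) = -B(y, x·z) + B(y, z·x) + B(x, z·y)`. -/
theorem stmt4 {F A : Type*} [Field F] [CharZero F] [AddCommGroup A] [Module F A]
    [FiniteDimensional F A]
    (mul : A →ₗ[F] A →ₗ[F] A) (hA : PreMalcevFn fun x y => mul x y)
    (T : Module.Dual F A ≃ₗ[F] A)
    (B : A → A → F) (hB : ∀ x y : A, B x y = T.symm x y) :
    IsOOp mul (dualRepSub mul mul.flip) (dualRepNeg mul.flip) T.toLinearMap ↔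
      ∀ x y z : A, B (mul x y) z = -B y (mul x z) + B y (mul z x) + B x (mul z y) := by
  constructor
  · intro h x y z
    have h1 := h (T.symm x) (T.symm y)
    simp only [LinearEquiv.coe_coe, T.apply_symm_apply] at h1
    have h2 := congrArg (fun a => T.symm a z) h1
    simp only [T.symm_apply_apply] at h2
    simp only [hB, dualRepSub, dualRepNeg, LinearMap.coe_mk, AddHom.coe_mk,
      LinearMap.sub_apply, LinearMap.neg_apply, LinearMap.add_apply,
      LinearMap.dualMap_apply, LinearMap.flip_apply, map_add, map_sub, map_neg] at h2 ⊢
    simpa using h2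
  · intro h ξ η
    apply T.symm.injective
    simp only [LinearEquiv.coe_coe, T.symm_apply_apply]
    refine LinearMap.ext fun z => ?_
    have h2 := h (T ξ) (T η) z
    simp only [hB, T.symm_apply_apply] at h2
    simp only [dualRepSub, dualRepNeg, LinearMap.coe_mk, AddHom.coe_mk,
      LinearMap.sub_apply, LinearMap.neg_apply, LinearMap.add_apply,
      LinearMap.dualMap_apply, LinearMap.flip_apply, LinearEquiv.coe_coe,
      map_add, map_sub, map_neg]
    simpa using h2
end

section
/- Let T : V → A be an O-operator of a pre-Malcev algebra A associated to a bimodule (V; ℓ, 𝔯). Define a product on V by u ⋄^T v = ℓ_{T(u)}(v) + 𝔯_{T(v)}(u) for all u, v ∈ V. Then (V, ⋄^T) is a pre-Malcev algebra, i.e. ⋄^T satisfies the pre-Malcev identity. -/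
open TensorProduct

/-- if `T` is an O-operator of a pre-Malcev algebra `A` associated to a
bimodule `(V; l, r)`, then `u ⋄^T v = l_{T u}(v) + r_{T v}(u)` makes `V` a pre-Malcev
algebra. -/
theorem stmt5 {F A V : Type*} [Field F] [CharZero F]
    [AddCommGroup A] [Module F A] [AddCommGroup V] [Module F V]
    (mul : A →ₗ[F] A →ₗ[F] A) (hA : PreMalcevFn fun x y => mul x y)
    (l r : A →ₗ[F] Module.End F V) (hbim : IsBimodule mul l r)
    (T : V →ₗ[F] A) (hT : IsOOp mul l r T) :
    PreMalcevFn (fun u v : V => l (T u) v + r (T v) u) := by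
  set m : V → V → V := fun u v : V => l (T u) v + r (T v) u with hm
  have hkey : ∀ u v : V, sdFn mul l r (T u, u) (T v, v) = (T (m u v), m u v) := by
    intro u v
    simp only [sdFn, hm]
    exact Prod.ext (hT u v) rfl
  intro x y z t
  have h := hbim (T x, x) (T y, y) (T z, z) (T t, t)
  simp only [hkey] at h
  have h2 := congrArg Prod.snd h
  simpa using h2
end

section
/- Let (N, S) be a Nijenhuis pair on a pre-Malcev algebra (A, ·) with bimodule (V; ℓ, 𝔯). Define ω(x,y) = N(x)·y + x·N(y) − N(x·y), ϖ^ℓ(x) = ℓ_{N(x)} + ℓ_x ∘ S − S ∘ ℓ_x, and ϖ^𝔯(x) = 𝔯_{N(x)} + 𝔯_x ∘ S − S ∘ 𝔯_x. Then for every t ∈ F: (i) the product x ·_t y = x·y + tω(x,y) makes A a pre-Malcev algebra; (ii) ℓ^t_x = ℓ_x + tϖ^ℓ(x) and 𝔯^t_x = 𝔯_x + tϖ^𝔯(x) make (V; ℓ^t, 𝔯^t) a bimodule of (A, ·_t); (iii) the deformation is trivial, i.e. (Id_A + tN)(x ·_t y) = (Id_A + tN)(x)·(Id_A + tN)(y),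 (Id_V + tS) ∘ ℓ^t_x = ℓ_{(Id_A + tN)(x)} ∘ (Id_V + tS), and (Id_V + tS) ∘ 𝔯^t_x = 𝔯_{(Id_A + tN)(x)} ∘ (Id_V + tS) for all x, y ∈ A. -/
open TensorProduct

/-- The pre-Malcev expression with the three product slots separated:
`u` innermost, `v` middle, `w` outermost. -/
def LL3 {B : Type*} [AddCommGroup B] (u v w : B → B → B) (x y z t : B) : B :=
    w (u y z) (v x t) - w (u z y) (v x t)
      + w (v (u x y) z) t - w (v (u y x) z) t
      - w (v z (u x y)) t + w (v z (u y x)) t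
      + w y (v (u x z) t) - w y (v (u z x) t)
      - w x (v y (u z t)) + w z (v x (u y t))

section Slots
variable {F B : Type*} [Field F] [AddCommGroup B] [Module F B]

lemma LL3_slot3 (s : F) (u v Pw Qw : B → B → B) (x y z t : B) :
    LL3 u v (fun a b => Pw a b + s • Qw a b) x y z t
      = LL3 u v Pw x y z t + s • LL3 u v Qw x y z t := by
  simp only [LL3, smul_add, smul_sub]
  module

lemma LL3_slot2 (s : F) (u Pv Qv : B → B → B) (w : B →ₗ[F] B →ₗ[F] B) (x y z t : B) :
    LL3 u (fun a b => Pv a b + s • Qv a b) (fun a b => w a b) x y z t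
      = LL3 u Pv (fun a b => w a b) x y z t
        + s • LL3 u Qv (fun a b => w a b) x y z t := by
  simp only [LL3, map_add, map_smul, LinearMap.add_apply, LinearMap.smul_apply,
    smul_add, smul_sub]
  module

lemma LL3_slot1 (s : F) (Pu Qu : B → B → B) (v w : B →ₗ[F] B →ₗ[F] B) (x y z t : B) :
    LL3 (fun a b => Pu a b + s • Qu a b) (fun a b => v a b) (fun a b => w a b) x y z t
      = LL3 Pu (fun a b => v a b) (fun a b => w a b) x y z t
        + s • LL3 Qu (fun a b => v a b) (fun a b => w a b) x y z t := by
  simp only [LL3, map_add, map_smul, LinearMap.add_apply, LinearMap.smul_apply,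
    smul_add, smul_sub]
  module

lemma LL3_expand (s : F) (P Q : B →ₗ[F] B →ₗ[F] B) (x y z t : B) :
    LL3 (fun a b => P a b + s • Q a b) (fun a b => P a b + s • Q a b)
        (fun a b => P a b + s • Q a b) x y z t
      = LL3 (fun a b => P a b) (fun a b => P a b) (fun a b => P a b) x y z t
        + s • (LL3 (fun a b => Q a b) (fun a b => P a b) (fun a b => P a b) x y z t
            + LL3 (fun a b => P a b) (fun a b => Q a b) (fun a b => P a b) x y z t
            + LL3 (fun a b => P a b) (fun a b => P a b) (fun a b => Q a b) x y z t)
        + (s^2) • (LL3 (fun a b => P a b) (fun a b => Q a b) (fun a b => Q a b) x y z t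
            + LL3 (fun a b => Q a b) (fun a b => P a b) (fun a b => Q a b) x y z t
            + LL3 (fun a b => Q a b) (fun a b => Q a b) (fun a b => P a b) x y z t)
        + (s^3) • LL3 (fun a b => Q a b) (fun a b => Q a b) (fun a b => Q a b) x y z t := by
  set M : B → B → B := fun a b => P a b + s • Q a b with hM
  have h3 : ∀ u v : B → B → B,
      LL3 u v M x y z t = LL3 u v (fun a b => P a b) x y z t
        + s • LL3 u v (fun a b => Q a b) x y z t := by
    intro u v; rw [hM]; exact LL3_slot3 s u v _ _ x y z t
  have h2 : ∀ (u : B → B → B) (w : B →ₗ[F] B →ₗ[F] B),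
      LL3 u M (fun a b => w a b) x y z t
        = LL3 u (fun a b => P a b) (fun a b => w a b) x y z t
          + s • LL3 u (fun a b => Q a b) (fun a b => w a b) x y z t := by
    intro u w; rw [hM]; exact LL3_slot2 s u _ _ w x y z t
  have h1 : ∀ (v w : B →ₗ[F] B →ₗ[F] B),
      LL3 M (fun a b => v a b) (fun a b => w a b) x y z t
        = LL3 (fun a b => P a b) (fun a b => v a b) (fun a b => w a b) x y z t
          + s • LL3 (fun a b => Q a b) (fun a b => v a b) (fun a b => w a b) x y z t := by
    intro v w; rw [hM]; exact LL3_slot1 s _ _ v w x y z t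
  rw [h3 M M, h2 M P, h2 M Q, h1 P P, h1 Q P, h1 P Q, h1 Q Q]
  module

lemma LL3_hom {C : Type*} [AddCommGroup C] [Module F C] (f : B →ₗ[F] C)
    (u : B → B → B) (u' : C → C → C)
    (h : ∀ a b : B, f (u a b) = u' (f a) (f b)) (x y z t : B) :
    f (LL3 u u u x y z t) = LL3 u' u' u' (f x) (f y) (f z) (f t) := by
  simp only [LL3, map_add, map_sub, h]

end Slots

set_option maxHeartbeats 1000000 in
theorem keyLemma {F B : Type*} [Field F] [CharZero F] [AddCommGroup B] [Module F B]
    (m : B →ₗ[F] B →ₗ[F] B) (hA : PreMalcevFn fun a b => m a b)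
    (N : B →ₗ[F] B) (hN : IsNijenhuisFn (fun a b => m a b) N) (c : F) :
    PreMalcevFn (fun a b => m a b + c • (m (N a) b + m a (N b) - N (m a b))) := by
  intro x y z w
  -- bundled deformation bilinear map
  obtain ⟨Q, hQ⟩ : ∃ Q : B →ₗ[F] B →ₗ[F] B,
      ∀ a b : B, Q a b = c • (m (N a) b + m a (N b) - N (m a b)) := by
    refine ⟨c • (m ∘ₗ N + m.compl₂ N - m.compr₂ N), fun a b => ?_⟩
    simp [LinearMap.smul_apply, LinearMap.add_apply, LinearMap.sub_apply,
      LinearMap.comp_apply, LinearMap.compl₂_apply, LinearMap.compr₂_apply]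
  -- the deformed family of products
  have hkey : ∀ (s : F) (a b : B),
      (m a b + s • Q a b) + (s*c) • N (m a b + s • Q a b)
        = m (a + (s*c) • N a) (b + (s*c) • N b) := by
    intro s a b
    have h := hN a b
    simp only [map_add, map_sub, map_smul] at h
    simp only [hQ, map_add, map_smul, map_sub, LinearMap.add_apply,
      LinearMap.smul_apply, LinearMap.sub_apply, smul_add, smul_sub]
    linear_combination (norm := module) (-(s*s*c*c) : F) • h
  obtain ⟨Ms, hMs⟩ : ∃ Ms : F → B → B → B,
      ∀ (s : F) (a b : B), Ms s a b = m a b + s • Q a b := ⟨_, fun _ _ _ => rfl⟩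
  have hMsf : ∀ s : F, Ms s = fun a b => m a b + s • Q a b := by
    intro s; funext a b; exact hMs s a b
  have hG : ∀ s : F,
      LL3 (Ms s) (Ms s) (Ms s) x y z w
        + (s*c) • N (LL3 (Ms s) (Ms s) (Ms s) x y z w) = 0 := by
    intro s
    have hφ : ∀ a b : B,
        (LinearMap.id + (s*c) • N : B →ₗ[F] B) (Ms s a b)
          = m ((LinearMap.id + (s*c) • N : B →ₗ[F] B) a)
              ((LinearMap.id + (s*c) • N : B →ₗ[F] B) b) := by
      intro a b
      simp only [hMs, LinearMap.add_apply, LinearMap.smul_apply, LinearMap.id_apply]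
      exact hkey s a b
    have htrans := LL3_hom (LinearMap.id + (s*c) • N : B →ₗ[F] B)
      (Ms s) (fun a b => m a b) hφ x y z w
    have hzero : LL3 (fun a b => m a b) (fun a b => m a b) (fun a b => m a b)
        ((LinearMap.id + (s*c) • N : B →ₗ[F] B) x)
        ((LinearMap.id + (s*c) • N : B →ₗ[F] B) y)
        ((LinearMap.id + (s*c) • N : B →ₗ[F] B) z)
        ((LinearMap.id + (s*c) • N : B →ₗ[F] B) w) = 0 := hA _ _ _ _
    have hfin := htrans.trans hzero
    simpa only [LinearMap.add_apply, LinearMap.smul_apply, LinearMap.id_apply] using hfin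
  -- expansion in powers of s
  have h0 : LL3 (fun a b => m a b) (fun a b => m a b) (fun a b => m a b) x y z w = 0 :=
    hA x y z w
  obtain ⟨R1, hR1d⟩ : ∃ R1 : B, R1 =
      LL3 (fun a b => Q a b) (fun a b => m a b) (fun a b => m a b) x y z w
      + LL3 (fun a b => m a b) (fun a b => Q a b) (fun a b => m a b) x y z w
      + LL3 (fun a b => m a b) (fun a b => m a b) (fun a b => Q a b) x y z w := ⟨_, rfl⟩
  obtain ⟨R2, hR2d⟩ : ∃ R2 : B, R2 =
      LL3 (fun a b => m a b) (fun a b => Q a b) (fun a b => Q a b) x y z w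
      + LL3 (fun a b => Q a b) (fun a b => m a b) (fun a b => Q a b) x y z w
      + LL3 (fun a b => Q a b) (fun a b => Q a b) (fun a b => m a b) x y z w := ⟨_, rfl⟩
  obtain ⟨R3, hR3d⟩ : ∃ R3 : B, R3 =
      LL3 (fun a b => Q a b) (fun a b => Q a b) (fun a b => Q a b) x y z w := ⟨_, rfl⟩
  have hE : ∀ s : F, (s • R1 + (s^2) • R2 + (s^3) • R3)
      + (s*c) • (s • N R1 + (s^2) • N R2 + (s^3) • N R3) = 0 := by
    intro s
    have h := hG s
    rw [hMsf s, LL3_expand s m Q x y z w, h0, zero_add] at h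
    rw [hR1d, hR2d, hR3d]
    simpa only [map_add, map_smul] using h
  have E1 := hE 1
  have E2 := hE 2
  have E3 := hE 3
  have E4 := hE 4
  -- Vandermonde elimination
  have h12R1 : (12:F) • R1 = 0 := by
    linear_combination (norm := module) (48:F) • E1 - (36:F) • E2 + (16:F) • E3 - (3:F) • E4
  have hR1 : R1 = 0 := by
    rcases smul_eq_zero.mp h12R1 with h' | h'
    · exact absurd h' (by norm_num)
    · exact h'
  have hNR1 : N R1 = 0 := by rw [hR1, map_zero]
  have h24R2 : (24:F) • R2 = 0 := by
    linear_combination (norm := module) (-104:F) • E1 + (114:F) • E2 - (56:F) • E3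
      + (11:F) • E4 - (24*c : F) • hNR1
  have hR2 : R2 = 0 := by
    rcases smul_eq_zero.mp h24R2 with h' | h'
    · exact absurd h' (by norm_num)
    · exact h'
  have hNR2 : N R2 = 0 := by rw [hR2, map_zero]
  have h12R3 : (12:F) • R3 = 0 := by
    linear_combination (norm := module) (18:F) • E1 - (24:F) • E2 + (14:F) • E3
      - (3:F) • E4 - (12*c : F) • hNR2
  have hR3 : R3 = 0 := by
    rcases smul_eq_zero.mp h12R3 with h' | h'
    · exact absurd h' (by norm_num)
    · exact h'
  -- conclude at s = 1
  have hV1 : LL3 (fun a b => m a b + (1:F) • Q a b) (fun a b => m a b + (1:F) • Q a b)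
      (fun a b => m a b + (1:F) • Q a b) x y z w = 0 := by
    rw [LL3_expand (1:F) m Q x y z w, h0, ← hR1d, ← hR2d, ← hR3d, hR1, hR2, hR3]
    simp
  simp only [LL3, one_smul, hQ] at hV1
  exact hV1

/-- a Nijenhuis pair `(N, S)` on a pre-Malcev algebra `A` with bimodule
`(V; l, r)` generates, for every `t`, an infinitesimal deformation
`(A, ·_t, l^t, r^t)`, and this deformation is trivial. -/
theorem stmt7 {F A V : Type*} [Field F] [CharZero F]
    [AddCommGroup A] [Module F A] [AddCommGroup V] [Module F V]
    (mul : A →ₗ[F] A →ₗ[F] A) (hA : PreMalcevFn fun x y => mul x y)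
    (l r : A →ₗ[F] Module.End F V) (hbim : IsBimodule mul l r)
    (N : A →ₗ[F] A) (S : V →ₗ[F] V) (hNS : IsNijPair mul l r N S) (t : F)
    (ω : A → A → A) (hω : ∀ x y : A, ω x y = mul (N x) y + mul x (N y) - N (mul x y))
    (lt : A → V → V)
    (hlt : ∀ (x : A) (v : V), lt x v = l x v + t • (l (N x) v + l x (S v) - S (l x v)))
    (rt : A → V → V)
    (hrt : ∀ (x : A) (v : V), rt x v = r x v + t • (r (N x) v + r x (S v) - S (r x v)))
    (mt : A → A → A) (hmt : ∀ x y : A, mt x y = mul x y + t • ω x y) :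
    PreMalcevFn mt
    ∧ PreMalcevFn (fun p q : A × V => (mt p.1 q.1, lt p.1 q.2 + rt q.1 p.2))
    ∧ (∀ x y : A, mt x y + t • N (mt x y) = mul (x + t • N x) (y + t • N y))
    ∧ (∀ (x : A) (v : V), lt x v + t • S (lt x v) = l (x + t • N x) (v + t • S v))
    ∧ (∀ (x : A) (v : V), rt x v + t • S (rt x v) = r (x + t • N x) (v + t • S v)) := by

  -- Part (i)
  have hmt' : mt = fun a b => mul a b + t • (mul (N a) b + mul a (N b) - N (mul a b)) := by
    funext a b; rw [hmt a b, hω a b]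
  have part1 : PreMalcevFn mt := by
    rw [hmt']; exact keyLemma mul hA N hNS.1 t
  -- Part (ii): semidirect product
  have hA' : PreMalcevFn (fun p q : A × V => (sdMul mul l r) p q) := hbim
  have hN' : IsNijenhuisFn (fun p q : A × V => (sdMul mul l r) p q) (N.prodMap S) := by
    intro p q
    have h1 := hNS.1 p.1 q.1
    have hl := hNS.2.1 p.1 q.2
    have hr := hNS.2.2 q.1 p.2
    simp only [map_add, map_sub] at hl hr
    simp only [sdMul, LinearMap.mk₂_apply, sdFn, LinearMap.prodMap_apply,
      Prod.mk_add_mk, Prod.mk_sub_mk, Prod.mk.injEq]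
    refine ⟨h1, ?_⟩
    simp only [map_add, map_sub]
    linear_combination (norm := module) hl + hr
  have key2 := keyLemma (sdMul mul l r) hA' (N.prodMap S) hN' t
  have heq : (fun p q : A × V => (mt p.1 q.1, lt p.1 q.2 + rt q.1 p.2))
      = fun p q : A × V => (sdMul mul l r) p q
        + t • ((sdMul mul l r) ((N.prodMap S) p) q + (sdMul mul l r) p ((N.prodMap S) q)
            - (N.prodMap S) ((sdMul mul l r) p q)) := by
    funext p q
    simp only [sdMul, LinearMap.mk₂_apply, sdFn, LinearMap.prodMap_apply,
      Prod.mk_add_mk, Prod.mk_sub_mk, Prod.smul_mk, hmt, hω, hlt, hrt,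
      Prod.mk.injEq, map_add, map_sub]
    refine ⟨trivial, ?_⟩
    module
  have part2 : PreMalcevFn (fun p q : A × V => (mt p.1 q.1, lt p.1 q.2 + rt q.1 p.2)) := by
    rw [heq]; exact key2
  -- Part (iii)
  refine ⟨part1, part2, ?_, ?_, ?_⟩
  · intro x y
    have h := hNS.1 x y
    simp only [map_add, map_sub] at h
    rw [hmt x y, hω x y]
    simp only [map_add, map_sub, map_smul, LinearMap.add_apply, LinearMap.smul_apply]
    linear_combination (norm := module) (-(t*t) : F) • h
  · intro x v
    have h := hNS.2.1 x v
    simp only [map_add, map_sub] at h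
    rw [hlt x v]
    simp only [map_add, map_sub, map_smul, LinearMap.add_apply, LinearMap.smul_apply]
    linear_combination (norm := module) (-(t*t) : F) • h
  · intro x v
    have h := hNS.2.2 x v
    simp only [map_add, map_sub] at h
    rw [hrt x v]
    simp only [map_add, map_sub, map_smul, LinearMap.add_apply, LinearMap.smul_apply]
    linear_combination (norm := module) (-(t*t) : F) • h
end

section
/- Let R be a Rota–Baxter operator (of weight zero) and N a Nijenhuis operator on a Malcev algebra (M, [−,−]), and suppose R ∘ N = N ∘ R. Then R is a Rota–Baxter operator on M equipped with the deformed bracket [x,y]_N = [N(x),y] + [x,N(y)] − N([x,y]); that is, [R(x), R(y)]_N = R([R(x), y]_N + [x, R(y)]_N) for all x, y ∈ M. -/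
open TensorProduct

/-- if `R` is a Rota-Baxter operator and `N` a Nijenhuis operator on a Malcev
algebra with `R ∘ N = N ∘ R`, then `R` is a Rota-Baxter operator for the deformed bracket
`[x,y]_N = [N x, y] + [x, N y] - N [x, y]`. -/
theorem stmt8 {F M : Type*} [Field F] [CharZero F] [AddCommGroup M] [Module F M]
    (br : M →ₗ[F] M →ₗ[F] M)
    (hanti : ∀ x y : M, br x y = -br y x)
    (hMal : ∀ x y z : M, br (br x y) (br x z) =
      br (br (br x y) z) x + br (br (br y z) x) x + br (br (br z x) x) y)
    (R N : M →ₗ[F] M)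
    (hR : ∀ x y : M, br (R x) (R y) = R (br (R x) y + br x (R y)))
    (hN : ∀ x y : M, br (N x) (N y) = N (br (N x) y + br x (N y) - N (br x y)))
    (hcomm : R ∘ₗ N = N ∘ₗ R) :
    ∀ x y : M,
      br (N (R x)) (R y) + br (R x) (N (R y)) - N (br (R x) (R y)) =
        R ((br (N (R x)) y + br (R x) (N y) - N (br (R x) y))
          + (br (N x) (R y) + br x (N (R y)) - N (br x (R y)))) := by
  intro x y
  have hc : ∀ z : M, R (N z) = N (R z) := fun z => LinearMap.congr_fun hcomm z
  rw [← hc x, ← hc y, hR (N x) y, hR x (N y), hR x y, ← hc, hc x, hc y,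
    ← map_add R (_ + _), ← map_sub]
  congr 1
  simp only [map_add, map_sub]
  abel
end

section
/- Let R be a Rota–Baxter operator (of weight zero) and N a Nijenhuis operator on a Malcev algebra (M, [−,−]), and suppose R ∘ N = N ∘ R. Then N is a Nijenhuis operator on the pre-Malcev algebra (M, ·^R) with product x ·^R y = [R(x), y]; that is, N(x) ·^R N(y) = N(N(x) ·^R y + x ·^R N(y) − N(x ·^R y)) for all x, y ∈ M. -/
open TensorProduct

/-- if `R` is a Rota-Baxter operator and `N` a Nijenhuis operator on a Malcev
algebra with `R ∘ N = N ∘ R`, then `N` is a Nijenhuis operator on the pre-Malcev algebra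
`(M, ·^R)` with `x ·^R y = [R x, y]`. -/
theorem stmt9 {F M : Type*} [Field F] [CharZero F] [AddCommGroup M] [Module F M]
    (br : M →ₗ[F] M →ₗ[F] M)
    (hanti : ∀ x y : M, br x y = -br y x)
    (hMal : ∀ x y z : M, br (br x y) (br x z) =
      br (br (br x y) z) x + br (br (br y z) x) x + br (br (br z x) x) y)
    (R N : M →ₗ[F] M)
    (hR : ∀ x y : M, br (R x) (R y) = R (br (R x) y + br x (R y)))
    (hN : ∀ x y : M, br (N x) (N y) = N (br (N x) y + br x (N y) - N (br x y)))
    (hcomm : R ∘ₗ N = N ∘ₗ R) :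
    IsNijenhuisFn (fun x y : M => br (R x) y) N := by
  intro x y
  have h : R (N x) = N (R x) := LinearMap.congr_fun hcomm x
  simp only [h]
  exact hN (R x) y
end

section
/- Let (N, S) be a Nijenhuis pair on a pre-Malcev algebra A with bimodule (V; ℓ, 𝔯). Then the linear map N + S : A ⊕ V → A ⊕ V, (x, u) ↦ (N(x), S(u)), is a Nijenhuis operator on the semi-direct product pre-Malcev algebra A ⋉_{ℓ,𝔯} V. -/
open TensorProduct

/-- a Nijenhuis pair `(N, S)` on a pre-Malcev algebra `A` with bimodule
`(V; l, r)` gives a Nijenhuis operator `N + S` on the semidirect product `A ⋉_{l,r} V`. -/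
theorem stmt10 {F A V : Type*} [Field F] [CharZero F]
    [AddCommGroup A] [Module F A] [AddCommGroup V] [Module F V]
    (mul : A →ₗ[F] A →ₗ[F] A) (hA : PreMalcevFn fun x y => mul x y)
    (l r : A →ₗ[F] Module.End F V) (hbim : IsBimodule mul l r)
    (N : A →ₗ[F] A) (S : V →ₗ[F] V) (hNS : IsNijPair mul l r N S) :
    IsNijenhuisFn (sdFn mul l r) (N.prodMap S) := by
  obtain ⟨hN, hl, hr⟩ := hNS
  intro p q
  obtain ⟨x, u⟩ := p
  obtain ⟨y, v⟩ := q
  have h1 := hl x v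
  have h2 := hr y u
  simp only [sdFn, LinearMap.prodMap_apply, Prod.mk_add_mk, Prod.mk_sub_mk,
    Prod.mk.injEq]
  constructor
  · exact hN x y
  · rw [h1, h2]
    simp only [map_add, map_sub]
    abel
end

section
/- Let A be a finite-dimensional pre-Malcev algebra with bimodule (V; ℓ, 𝔯), V finite-dimensional, N ∈ gl(A) and S ∈ gl(V). Then (N, S) is a Nijenhuis pair on A with bimodule (V; ℓ, 𝔯) if and only if (N, S*) is a dual-Nijenhuis pair on A with the dual bimodule (V*; ℓ* − 𝔯*, −𝔯*), where S* : V* → V* is the transpose of S. -/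
open TensorProduct

private lemma dual_ext' {F V : Type*} [Field F] [AddCommGroup V] [Module F V]
    {a b : V} (h : ∀ ξ : Module.Dual F V, ξ a = ξ b) : a = b := by
  rw [← sub_eq_zero, ← Module.forall_dual_apply_eq_zero_iff F (a - b)]
  intro ξ; simp [h ξ]

/-- `(N, S)` is a Nijenhuis pair on `A` with bimodule `(V; l, r)` iff
`(N, S*)` is a dual-Nijenhuis pair on `A` with the dual bimodule `(V*; l* - r*, -r*)`. -/
theorem stmt11 {F A V : Type*} [Field F] [CharZero F]
    [AddCommGroup A] [Module F A] [FiniteDimensional F A]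
    [AddCommGroup V] [Module F V] [FiniteDimensional F V]
    (mul : A →ₗ[F] A →ₗ[F] A) (hA : PreMalcevFn fun x y => mul x y)
    (l r : A →ₗ[F] Module.End F V) (hbim : IsBimodule mul l r)
    (N : A →ₗ[F] A) (S : V →ₗ[F] V) :
    IsNijPair mul l r N S ↔
      IsDualNijPair mul (dualRepSub l r) (dualRepNeg r) N S.dualMap := by
  constructor
  · rintro ⟨hN, hl, hr⟩
    refine ⟨hN, ?_, ?_⟩
    · intro x ξ
      ext v
      have Hl := congrArg ξ (hl x v)
      have Hr := congrArg ξ (hr x v)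
      simp only [map_add, map_sub] at Hl Hr
      simp only [dualRepSub, dualRepNeg, LinearMap.coe_mk, AddHom.coe_mk,
        LinearMap.sub_apply, LinearMap.neg_apply, LinearMap.add_apply,
        LinearMap.dualMap_apply, Module.Dual.transpose_apply]
      linear_combination Hl - Hr
    · intro x ξ
      ext v
      have Hr := congrArg ξ (hr x v)
      simp only [map_add, map_sub] at Hr
      simp only [dualRepSub, dualRepNeg, LinearMap.coe_mk, AddHom.coe_mk,
        LinearMap.sub_apply, LinearMap.neg_apply, LinearMap.add_apply,
        LinearMap.dualMap_apply]
      linear_combination -Hr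
  · rintro ⟨hN, hl, hr⟩
    have hr' : ∀ (x : A) (v : V), r (N x) (S v) = S (r (N x) v + r x (S v) - S (r x v)) := by
      intro x v
      apply dual_ext' (F := F)
      intro ξ
      have Hr := congrArg (fun η : Module.Dual F V => η v) (hr x ξ)
      simp only [dualRepNeg, LinearMap.coe_mk, AddHom.coe_mk,
        LinearMap.sub_apply, LinearMap.neg_apply, LinearMap.add_apply,
        LinearMap.dualMap_apply] at Hr
      simp only [map_add, map_sub]
      linear_combination -Hr
    refine ⟨hN, ?_, hr'⟩
    intro x v
    apply dual_ext' (F := F)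
    intro ξ
    have Hl := congrArg (fun η : Module.Dual F V => η v) (hl x ξ)
    have Hr := congrArg ξ (hr' x v)
    simp only [dualRepSub, dualRepNeg, LinearMap.coe_mk, AddHom.coe_mk,
      LinearMap.sub_apply, LinearMap.neg_apply, LinearMap.add_apply,
      LinearMap.dualMap_apply] at Hl
    simp only [map_add, map_sub] at Hr ⊢
    linear_combination Hl + Hr
end

section
/- Let (N, S) be a perfect Nijenhuis pair on a finite-dimensional pre-Malcev algebra A with finite-dimensional bimodule (V; ℓ, 𝔯). Then the linear map N + S* : A ⊕ V* → A ⊕ V*, (x, ξ) ↦ (N(x), S*(ξ)), is a Nijenhuis operator on the semi-direct product pre-Malcev algebra A ⋉_{ℓ*−𝔯*, −𝔯*} V*, where S* is the transpose of S. -/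
open TensorProduct

/-- a perfect Nijenhuis pair `(N, S)` gives a Nijenhuis operator `N + S*`
on the semidirect product `A ⋉_{l*-r*, -r*} V*`. -/
theorem stmt12 {F A V : Type*} [Field F] [CharZero F]
    [AddCommGroup A] [Module F A] [FiniteDimensional F A]
    [AddCommGroup V] [Module F V] [FiniteDimensional F V]
    (mul : A →ₗ[F] A →ₗ[F] A) (hA : PreMalcevFn fun x y => mul x y)
    (l r : A →ₗ[F] Module.End F V) (hbim : IsBimodule mul l r)
    (N : A →ₗ[F] A) (S : V →ₗ[F] V) (hNS : IsPerfectNijPair mul l r N S) :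
    IsNijenhuisFn (sdFn mul (dualRepSub l r) (dualRepNeg r))
      (N.prodMap S.dualMap) := by
  obtain ⟨⟨hN, hl, hr⟩, hpl, hpr⟩ := hNS
  intro p q
  obtain ⟨x, ξ⟩ := p
  obtain ⟨y, η⟩ := q
  apply Prod.ext
  · simpa [sdFn] using hN x y
  · apply LinearMap.ext
    intro v
    simp only [sdFn, dualRepSub, dualRepNeg, LinearMap.prodMap_apply, LinearMap.coe_mk,
      AddHom.coe_mk, LinearMap.sub_apply, LinearMap.neg_apply, LinearMap.dualMap_apply',
      LinearMap.add_apply, map_add, map_sub, map_neg, LinearMap.coe_comp, Function.comp_apply,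
      Prod.snd_add, Prod.snd_sub, LinearMap.comp_apply]
    rw [hl x v, hr x v, hr y v]
    have e1 : S (S (l x v)) = (2 : F) • S (l x (S v)) - l x (S (S v)) :=
      eq_sub_of_add_eq (hpl x v)
    have e2 : S (S (r x v)) = (2 : F) • S (r x (S v)) - r x (S (S v)) :=
      eq_sub_of_add_eq (hpr x v)
    have e3 : S (S (r y v)) = (2 : F) • S (r y (S v)) - r y (S (S v)) :=
      eq_sub_of_add_eq (hpr y v)
    simp only [map_add, map_sub, map_smul, e1, e2, e3, smul_eq_mul]
    ring
end

section
/- Let (T, N, S) be an O-N structure or an O-dual-N structure on a pre-Malcev algebra A with bimodule (V; ℓ, 𝔯). Then S is a Nijenhuis operator on the pre-Malcev algebra (V, ⋄^T); that is, S(u) ⋄^T S(v) = S(S(u) ⋄^T v + u ⋄^T S(v) − S(u ⋄^T v)) for all u, v ∈ V. -/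
open TensorProduct

/-- if `(T, N, S)` is an O-N structure or an O-dual-N structure on a
pre-Malcev algebra `A` with bimodule `(V; l, r)`, then `S` is a Nijenhuis operator on the
pre-Malcev algebra `(V, ⋄^T)`. -/
theorem stmt13 {F A V : Type*} [Field F] [CharZero F]
    [AddCommGroup A] [Module F A] [AddCommGroup V] [Module F V]
    (mul : A →ₗ[F] A →ₗ[F] A) (hA : PreMalcevFn fun x y => mul x y)
    (l r : A →ₗ[F] Module.End F V) (hbim : IsBimodule mul l r)
    (T : V →ₗ[F] A) (N : A →ₗ[F] A) (S : V →ₗ[F] V)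
    (h : IsONStruct mul l r T N S ∨ IsODualNStruct mul l r T N S) :
    IsNijenhuisFn (dia l r T) S := by
  have hNT : ∀ w : V, N (T w) = T (S w) := by
    rcases h with ⟨_, _, h3, _⟩ | ⟨_, _, h3, _⟩ <;> intro w <;>
      simpa using LinearMap.ext_iff.mp h3 w
  have h4 : ∀ u v : V, dia l r (N ∘ₗ T) u v = diaS l r T S u v := by
    rcases h with ⟨_, _, _, h4⟩ | ⟨_, _, _, h4⟩ <;> exact h4
  have hK : ∀ a b : V,
      l (T a) (S b) + r (T b) (S a) = S (l (T a) b) + S (r (T b) a) := by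
    intro a b
    have h' := h4 a b
    simp only [dia, diaS, LinearMap.comp_apply, hNT, map_add, map_sub] at h'
    linear_combination (norm := abel) -h'
  intro u v
  show dia l r T (S u) (S v) = S (dia l r T (S u) v + dia l r T u (S v) - S (dia l r T u v))
  rw [show (dia l r T (S u) v + dia l r T u (S v) - S (dia l r T u v)) = diaS l r T S u v from
      rfl, ← h4 u v]
  simp only [dia, LinearMap.comp_apply, ← hNT, map_add]
  rcases h with ⟨_, ⟨_, hl, hr⟩, _, _⟩ | ⟨_, ⟨_, hl, hr⟩, _, _⟩
  · rw [hl (T u) v, hr (T v) u]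
    have hx := congrArg S (hK u v)
    simp only [map_add, map_sub] at hx ⊢
    linear_combination (norm := abel) hx
  · have E1 := hl (T u) v
    have E2 := hr (T v) u
    have K1 := hK u (S v)
    have K2 := hK (S u) v
    simp only [← hNT] at K1 K2
    have H : ((l (N (T u))) (S v) + (r (N (T v))) (S u))
          + ((l (N (T u))) (S v) + (r (N (T v))) (S u))
        = (S ((l (N (T u))) v) + S ((r (N (T v))) u))
          + (S ((l (N (T u))) v) + S ((r (N (T v))) u)) := by
      linear_combination (norm := abel) E1 + E2 + K1 + K2
    have H2 : (2 : F) • ((l (N (T u))) (S v) + (r (N (T v))) (S u))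
        = (2 : F) • (S ((l (N (T u))) v) + S ((r (N (T v))) u)) := by
      rw [two_smul, two_smul]; exact H
    exact smul_right_injective V two_ne_zero H2
end

section
/- Let (T, N, S) be an O-N structure or an O-dual-N structure on a pre-Malcev algebra A with bimodule (V; ℓ, 𝔯). Then N ∘ T is an O-operator of A associated to (V; ℓ, 𝔯). -/
open TensorProduct

/-- if `(T, N, S)` is an O-N structure or an O-dual-N structure on a
pre-Malcev algebra `A` with bimodule `(V; l, r)`, then `N ∘ T` is an O-operator. -/
theorem stmt14 {F A V : Type*} [Field F] [CharZero F]
    [AddCommGroup A] [Module F A] [AddCommGroup V] [Module F V]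
    (mul : A →ₗ[F] A →ₗ[F] A) (hA : PreMalcevFn fun x y => mul x y)
    (l r : A →ₗ[F] Module.End F V) (hbim : IsBimodule mul l r)
    (T : V →ₗ[F] A) (N : A →ₗ[F] A) (S : V →ₗ[F] V)
    (h : IsONStruct mul l r T N S ∨ IsODualNStruct mul l r T N S) :
    IsOOp mul l r (N ∘ₗ T) := by
  obtain ⟨hT, hP, hNT, hdia⟩ | ⟨hT, hP, hNT, hdia⟩ := h <;>
  · have hN := hP.1
    intro v w
    simp only [LinearMap.comp_apply]
    have key : l (N (T v)) w + r (N (T w)) v = diaS l r T S v w := by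
      have := hdia v w
      simpa [dia, LinearMap.comp_apply] using this
    rw [key]
    have hTd : ∀ u u', T (dia l r T u u') = mul (T u) (T u') := fun u u' => (hT u u').symm
    have hTS : ∀ u, T (S u) = N (T u) := fun u =>
      (congrFun (congrArg DFunLike.coe hNT) u).symm
    simp only [diaS, map_sub, map_add, hTd, hTS]
    simpa [map_add, map_sub] using hN (T v) (T w)
end
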